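/- arXiv:2004.11930 — 5 statements merged into one kernel-verified Lean document; each statement's English description precedes it below -/
import Mathlib

section
/- Let k \ge 3 and n \ge k. If G is an n-vertex graph with no copy of \widehat{P}_k (the suspension of the path with k edges), then t(G) \le ((k-1)/12) n^2 + ((k-1)^2/12) n. -/
open SimpleGraph

/-- `G` contains a copy of `H` (a subgraph isomorphic to `H`). -/
def containsCopy {W V : Type*} (H : SimpleGraph W) (G : SimpleGraph V) : Prop :=
  ∃ f : H →g G, Function.Injective f

/-- The number of triangles of `G`. -/
noncomputable def triCount {V : Type*} (G : SimpleGraph V) : ℕ :=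
  {s : Finset V | G.IsNClique 3 s}.ncard

/-- The number of edges of `G`. -/
noncomputable def edgeCount {V : Type*} (G : SimpleGraph V) : ℕ :=
  G.edgeSet.ncard

/-- The suspension `K_1 ∨ H` of a graph `H`: a new vertex (`none`) joined to all
vertices of `H`. -/
def susp {W : Type*} (H : SimpleGraph W) : SimpleGraph (Option W) where
  Adj a b :=
    match a, b with
    | some x, some y => H.Adj x y
    | some _, none => True
    | none, some _ => True
    | none, none => False
  symm := by
    constructor
    rintro (_ | x) (_ | y) h
    · exact h
    · trivial
    · trivial
    · exact h.symm
  loopless := by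
    constructor
    rintro (_ | x) h
    · exact h
    · exact H.loopless.irrefl x h

/-- The Turán number: maximum number of edges of an `H`-free graph on `n` vertices. -/
noncomputable def exNum (n : ℕ) {W : Type*} (H : SimpleGraph W) : ℕ :=
  sSup {m | ∃ G : SimpleGraph (Fin n), ¬ containsCopy H G ∧ edgeCount G = m}

/-- The codegree of the pair `a, b`: number of common neighbours. -/
noncomputable def codeg {V : Type*} (G : SimpleGraph V) (a b : V) : ℕ :=
  (G.neighborSet a ∩ G.neighborSet b).ncard

open SimpleGraph Finset
set_option linter.unusedSectionVars false

section Aux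
variable {V : Type*} (G : SimpleGraph V) [DecidableEq V] [DecidableRel G.Adj]

def dartsIn (s : Finset V) : Finset (V × V) := (s ×ˢ s).filter fun p => G.Adj p.1 p.2

def degIn (s : Finset V) (v : V) : ℕ := (s.filter fun w => G.Adj v w).card

def edgesIn (s : Finset V) : Finset (Sym2 V) := (dartsIn G s).image fun p => s(p.1, p.2)

def PathIn (s : Finset V) (k : ℕ) : Prop :=
  ∃ f : ℕ → V, (∀ i ≤ k, f i ∈ s) ∧ (∀ i ≤ k, ∀ j ≤ k, f i = f j → i = j) ∧
    ∀ i < k, G.Adj (f i) (f (i + 1))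

variable {G}

lemma mem_dartsIn {s : Finset V} {p : V × V} :
    p ∈ dartsIn G s ↔ p.1 ∈ s ∧ p.2 ∈ s ∧ G.Adj p.1 p.2 := by
  simp [dartsIn, and_assoc]

lemma mem_edgesIn {s : Finset V} {a b : V} :
    s(a, b) ∈ edgesIn G s ↔ a ∈ s ∧ b ∈ s ∧ G.Adj a b := by
  constructor
  · rintro h
    obtain ⟨⟨x, y⟩, hp, he⟩ := Finset.mem_image.1 h
    rw [mem_dartsIn] at hp
    rw [Sym2.eq_iff] at he
    rcases he with ⟨rfl, rfl⟩ | ⟨rfl, rfl⟩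
    · exact hp
    · exact ⟨hp.2.1, hp.1, hp.2.2.symm⟩
  · rintro ⟨ha, hb, hadj⟩
    exact Finset.mem_image.2 ⟨(a, b), mem_dartsIn.2 ⟨ha, hb, hadj⟩, rfl⟩

lemma card_dartsIn (s : Finset V) : (dartsIn G s).card = ∑ v ∈ s, degIn G s v := by
  unfold dartsIn degIn
  rw [Finset.card_filter, Finset.sum_product]
  exact Finset.sum_congr rfl fun v _ => (Finset.card_filter _ _).symm

lemma dartsIn_card_eq (s : Finset V) : (dartsIn G s).card = 2 * (edgesIn G s).card := by
  rw [Finset.card_eq_sum_card_fiberwise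
    (f := fun p : V × V => s(p.1, p.2)) (t := edgesIn G s)
    (fun p hp => by
      rw [Finset.mem_coe, mem_dartsIn] at hp; exact Finset.mem_coe.2 (mem_edgesIn.2 hp))]
  rw [Finset.sum_congr rfl (fun e he => ?_), Finset.sum_const, smul_eq_mul, mul_comm]
  induction e with
  | _ a b =>
    rw [mem_edgesIn] at he
    obtain ⟨ha, hb, hadj⟩ := he
    have hne : a ≠ b := hadj.ne
    have : (dartsIn G s).filter (fun p => s(p.1, p.2) = s(a, b)) = {(a, b), (b, a)} := by
      ext ⟨x, y⟩
      simp only [Finset.mem_filter, mem_dartsIn, Finset.mem_insert, Finset.mem_singleton,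
        Sym2.eq_iff, Prod.mk.injEq]
      constructor
      · rintro ⟨-, ⟨rfl, rfl⟩ | ⟨rfl, rfl⟩⟩
        · exact Or.inl ⟨rfl, rfl⟩
        · exact Or.inr ⟨rfl, rfl⟩
      · rintro (⟨rfl, rfl⟩ | ⟨rfl, rfl⟩)
        · exact ⟨⟨ha, hb, hadj⟩, Or.inl ⟨rfl, rfl⟩⟩
        · exact ⟨⟨hb, ha, hadj.symm⟩, Or.inr ⟨rfl, rfl⟩⟩
    rw [this, Finset.card_insert_of_notMem (by simp [hne]), Finset.card_singleton]

lemma edgesIn_mono {s t : Finset V} (hst : s ⊆ t) : edgesIn G s ⊆ edgesIn G t := by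
  intro e he
  induction e with
  | _ a b =>
    rw [mem_edgesIn] at he ⊢
    exact ⟨hst he.1, hst he.2.1, he.2.2⟩

lemma pathIn_mono {s t : Finset V} (hst : s ⊆ t) {k : ℕ} (h : PathIn G s k) : PathIn G t k := by
  obtain ⟨f, h1, h2, h3⟩ := h
  exact ⟨f, fun i hi => hst (h1 i hi), h2, h3⟩

lemma pathIn_trunc {s : Finset V} {k m : ℕ} (hkm : k ≤ m) (h : PathIn G s m) : PathIn G s k := by
  obtain ⟨f, h1, h2, h3⟩ := h
  exact ⟨f, fun i hi => h1 i (hi.trans hkm), fun i hi j hj => h2 i (hi.trans hkm) j (hj.trans hkm),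
    fun i hi => h3 i (lt_of_lt_of_le hi hkm)⟩

lemma degIn_add_one_le {s : Finset V} {v : V} (hv : v ∈ s) : degIn G s v + 1 ≤ s.card := by
  unfold degIn
  have h1 : (s.filter fun w => G.Adj v w) ⊆ s.erase v := by
    intro w hw
    rw [Finset.mem_filter] at hw
    exact Finset.mem_erase.2 ⟨(G.ne_of_adj hw.2).symm, hw.1⟩
  have := Finset.card_le_card h1
  rw [← Finset.card_erase_add_one hv]
  omega

lemma edgesIn_erase {s : Finset V} {v : V} (hv : v ∈ s) :
    (edgesIn G s).card = (edgesIn G (s.erase v)).card + degIn G s v := by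
  have hsplit : edgesIn G (s.erase v) = (edgesIn G s).filter (fun e => v ∉ e) := by
    ext e
    induction e with
    | _ a b =>
      simp only [Finset.mem_filter, mem_edgesIn, Finset.mem_erase, Sym2.mem_iff]
      constructor
      · rintro ⟨⟨ha1, ha2⟩, ⟨hb1, hb2⟩, hadj⟩
        exact ⟨⟨ha2, hb2, hadj⟩, by rintro (rfl | rfl) <;> simp_all⟩
      · rintro ⟨⟨ha, hb, hadj⟩, hne⟩
        push_neg at hne
        exact ⟨⟨Ne.symm hne.1, ha⟩, ⟨Ne.symm hne.2, hb⟩, hadj⟩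
  have hdeg : ((edgesIn G s).filter (fun e => v ∈ e)).card = degIn G s v := by
    rw [eq_comm]
    unfold degIn
    apply Finset.card_bij (fun w _ => s(v, w))
    · intro w hw
      rw [Finset.mem_filter] at hw
      rw [Finset.mem_filter, mem_edgesIn]
      exact ⟨⟨hv, hw.1, hw.2⟩, by simp⟩
    · intro w1 h1 w2 h2 he
      rw [Sym2.eq_iff] at he
      rcases he with ⟨-, h⟩ | ⟨h1', h2'⟩
      · exact h
      · rw [Finset.mem_filter] at h1
        exact absurd (h2' ▸ h1.2) (G.irrefl)
    · intro e he
      rw [Finset.mem_filter] at he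
      obtain ⟨he1, he2⟩ := he
      induction e with
      | _ a b =>
        rw [mem_edgesIn] at he1
        rw [Sym2.mem_iff] at he2
        rcases he2 with rfl | rfl
        · exact ⟨b, Finset.mem_filter.2 ⟨he1.2.1, he1.2.2⟩, rfl⟩
        · exact ⟨a, Finset.mem_filter.2 ⟨he1.1, he1.2.2.symm⟩, Sym2.eq_swap⟩
  rw [hsplit, ← hdeg, add_comm]
  exact (Finset.card_filter_add_card_filter_not (s := edgesIn G s) (p := fun e => v ∈ e)).symm

end Aux
section Aux2
variable {V : Type*} {G : SimpleGraph V} [DecidableEq V] [DecidableRel G.Adj]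

lemma edgesIn_split {s A : Finset V} (hAs : A ⊆ s)
    (hcl : ∀ a ∈ A, ∀ b ∈ s, G.Adj a b → b ∈ A) :
    (edgesIn G s).card = (edgesIn G A).card + (edgesIn G (s \ A)).card := by
  have hunion : edgesIn G s = edgesIn G A ∪ edgesIn G (s \ A) := by
    ext e
    induction e with
    | _ a b =>
      simp only [Finset.mem_union, mem_edgesIn]
      constructor
      · rintro ⟨ha, hb, hadj⟩
        by_cases haA : a ∈ A
        · exact Or.inl ⟨haA, hcl a haA b hb hadj, hadj⟩
        · refine Or.inr ⟨Finset.mem_sdiff.2 ⟨ha, haA⟩, Finset.mem_sdiff.2 ⟨hb, ?_⟩, hadj⟩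
          intro hbA
          exact haA (hcl b hbA a ha hadj.symm)
      · rintro (⟨ha, hb, hadj⟩ | ⟨ha, hb, hadj⟩)
        · exact ⟨hAs ha, hAs hb, hadj⟩
        · exact ⟨(Finset.mem_sdiff.1 ha).1, (Finset.mem_sdiff.1 hb).1, hadj⟩
  have hdisj : Disjoint (edgesIn G A) (edgesIn G (s \ A)) := by
    rw [Finset.disjoint_left]
    intro e he1 he2
    induction e with
    | _ a b =>
      rw [mem_edgesIn] at he1 he2
      exact (Finset.mem_sdiff.1 he2.1).2 he1.1
  rw [hunion, Finset.card_union_of_disjoint hdisj]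

lemma crossing_aux {s : Finset V} :
    ∀ {x u : V}, Relation.ReflTransGen (fun a b => b ∈ s ∧ G.Adj a b) x u →
      ∀ B : Finset V, x ∈ B → u ∉ B → ∃ a ∈ B, ∃ b ∈ s, b ∉ B ∧ G.Adj a b := by
  intro x u h
  induction h with
  | refl => intro B hx hu; exact absurd hx hu
  | tail _ hstep ih =>
    rename_i u' u hrt
    intro B hx hu
    by_cases hu' : u' ∈ B
    · exact ⟨u', hu', u, hstep.1, hu, hstep.2⟩
    · exact ih B hx hu'

lemma crossing {s : Finset V} {v₀ : V} (hv₀ : v₀ ∈ s)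
    (hall : ∀ u ∈ s, Relation.ReflTransGen (fun a b => b ∈ s ∧ G.Adj a b) v₀ u)
    {A : Finset V} (hAs : A ⊆ s) (hA : A.Nonempty) (hsA : (s \ A).Nonempty) :
    ∃ a ∈ A, ∃ b ∈ s, b ∉ A ∧ G.Adj a b := by
  obtain ⟨a₀, ha₀⟩ := hA
  obtain ⟨b₀, hb₀⟩ := hsA
  rw [Finset.mem_sdiff] at hb₀
  by_cases hv : v₀ ∈ A
  · exact crossing_aux (hall b₀ hb₀.1) A hv hb₀.2
  · have h := crossing_aux (G := G) (hall a₀ (hAs ha₀)) (s \ A)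
      (Finset.mem_sdiff.2 ⟨hv₀, hv⟩) (by simp [Finset.mem_sdiff, ha₀])
    obtain ⟨a, ha, b, hb, hbn, hadj⟩ := h
    rw [Finset.mem_sdiff] at ha
    have hbA : b ∈ A := by
      by_contra hc
      exact hbn (Finset.mem_sdiff.2 ⟨hb, hc⟩)
    exact ⟨b, hbA, a, ha.1, ha.2, hadj.symm⟩

lemma EG_connected {s : Finset V} {k : ℕ} (hk : 1 ≤ k) (hbig : k + 1 ≤ s.card)
    (hdeg : ∀ v ∈ s, k ≤ 2 * degIn G s v)
    (hconn : ∀ A : Finset V, A ⊆ s → A.Nonempty → (s \ A).Nonempty →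
      ∃ a ∈ A, ∃ b ∈ s, b ∉ A ∧ G.Adj a b)
    (hnp : ¬ PathIn G s k) : False := by
  classical
  obtain ⟨v₀, hv₀⟩ : s.Nonempty := Finset.card_pos.1 (by omega)
  have hP0 : PathIn G s 0 :=
    ⟨fun _ => v₀, fun _ _ => hv₀, fun i hi j hj _ => by omega, fun i hi => absurd hi (by omega)⟩
  set l := Nat.findGreatest (fun m => PathIn G s m) k with hldef
  have hl : PathIn G s l := Nat.findGreatest_spec (Nat.zero_le k) hP0
  have hlk : l ≤ k := Nat.findGreatest_le k
  have hltk : l < k := lt_of_le_of_ne hlk (fun h => hnp (h ▸ hl))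
  have hnl1 : ¬ PathIn G s (l + 1) :=
    Nat.findGreatest_is_greatest (Nat.lt_succ_self l) (by omega)
  obtain ⟨f, hfmem, hfinj, hfadj⟩ := hl
  -- every neighbour of `f 0` in `s` is an interior vertex of the path
  have claimA : ∀ y ∈ s, G.Adj (f 0) y → ∃ p, 1 ≤ p ∧ p ≤ l ∧ f p = y := by
    intro y hy hadj
    by_contra hno
    push_neg at hno
    have hyne : ∀ p ≤ l, f p ≠ y := by
      intro p hp
      rcases Nat.eq_zero_or_pos p with rfl | hp1
      · exact fun h => G.loopless.irrefl y (h ▸ hadj)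
      · exact hno p hp1 hp
    apply hnl1
    refine ⟨fun i => if i = 0 then y else f (i - 1), ?_, ?_, ?_⟩
    · intro i hi
      dsimp only
      by_cases h0 : i = 0
      · rw [if_pos h0]; exact hy
      · rw [if_neg h0]; exact hfmem (i - 1) (by omega)
    · intro i hi j hj hij
      dsimp only at hij
      by_cases h0 : i = 0 <;> by_cases h0' : j = 0
      · omega
      · rw [if_pos h0, if_neg h0'] at hij
        exact absurd hij.symm (hyne (j - 1) (by omega))
      · rw [if_neg h0, if_pos h0'] at hij
        exact absurd hij (hyne (i - 1) (by omega))
      · rw [if_neg h0, if_neg h0'] at hij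
        have := hfinj (i - 1) (by omega) (j - 1) (by omega) hij
        omega
    · intro i hi
      dsimp only
      by_cases h0 : i = 0
      · subst h0
        rw [if_pos rfl, if_neg (by omega : ¬ (0 + 1 = 0))]
        have : (0 : ℕ) + 1 - 1 = 0 := by omega
        rw [this]
        exact hadj.symm
      · rw [if_neg h0, if_neg (by omega : ¬ (i + 1 = 0))]
        have h1 : i - 1 < l := by omega
        have := hfadj (i - 1) h1
        have he : i - 1 + 1 = i := by omega
        rw [he] at this
        have he2 : i + 1 - 1 = i := by omega
        rw [he2]
        exact this
  have claimB : ∀ y ∈ s, G.Adj (f l) y → ∃ p, p < l ∧ f p = y := by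
    intro y hy hadj
    by_contra hno
    push_neg at hno
    have hyne : ∀ p ≤ l, f p ≠ y := by
      intro p hp
      rcases eq_or_lt_of_le hp with rfl | hpl
      · exact fun h => G.loopless.irrefl y (h ▸ hadj)
      · exact hno p hpl
    apply hnl1
    refine ⟨fun i => if i ≤ l then f i else y, ?_, ?_, ?_⟩
    · intro i hi
      dsimp only
      by_cases h : i ≤ l
      · rw [if_pos h]; exact hfmem i h
      · rw [if_neg h]; exact hy
    · intro i hi j hj hij
      dsimp only at hij
      by_cases h : i ≤ l <;> by_cases h' : j ≤ l
      · rw [if_pos h, if_pos h'] at hij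
        exact hfinj i h j h' hij
      · rw [if_pos h, if_neg h'] at hij
        exact absurd hij (hyne i h)
      · rw [if_neg h, if_pos h'] at hij
        exact absurd hij.symm (hyne j h')
      · omega
    · intro i hi
      dsimp only
      by_cases h : i < l
      · rw [if_pos (by omega : i ≤ l), if_pos (by omega : i + 1 ≤ l)]
        exact hfadj i h
      · have hil : i = l := by omega
        rw [if_pos (by omega : i ≤ l), if_neg (by omega : ¬ (i + 1 ≤ l)), hil]
        exact hadj
  set S := (Finset.range l).filter (fun i => G.Adj (f 0) (f (i + 1))) with hSdef
  set T := (Finset.range l).filter (fun i => G.Adj (f l) (f i)) with hTdef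
  have hf0s : f 0 ∈ s := hfmem 0 (Nat.zero_le l)
  have hfls : f l ∈ s := hfmem l le_rfl
  have hS : degIn G s (f 0) ≤ S.card := by
    unfold degIn
    apply Finset.card_le_card_of_injOn
      (fun y => (if h : ∃ p, 1 ≤ p ∧ p ≤ l ∧ f p = y then h.choose else 1) - 1)
    · intro y hy
      rw [Finset.mem_coe, Finset.mem_filter] at hy
      have hex : ∃ p, 1 ≤ p ∧ p ≤ l ∧ f p = y := claimA y hy.1 hy.2
      dsimp only
      rw [dif_pos hex]
      obtain ⟨h1, h2, h3⟩ := hex.choose_spec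
      rw [hSdef, Finset.mem_coe, Finset.mem_filter, Finset.mem_range]
      refine ⟨by omega, ?_⟩
      have he : hex.choose - 1 + 1 = hex.choose := by omega
      rw [he, h3]
      exact hy.2
    · intro y1 h1 y2 h2 heq
      dsimp only at heq
      rw [Finset.mem_coe, Finset.mem_filter] at h1 h2
      have hex1 : ∃ p, 1 ≤ p ∧ p ≤ l ∧ f p = y1 := claimA y1 h1.1 h1.2
      have hex2 : ∃ p, 1 ≤ p ∧ p ≤ l ∧ f p = y2 := claimA y2 h2.1 h2.2
      rw [dif_pos hex1, dif_pos hex2] at heq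
      obtain ⟨a1, b1, c1⟩ := hex1.choose_spec
      obtain ⟨a2, b2, c2⟩ := hex2.choose_spec
      have : hex1.choose = hex2.choose := by omega
      rw [← c1, ← c2, this]
  have hT : degIn G s (f l) ≤ T.card := by
    unfold degIn
    apply Finset.card_le_card_of_injOn
      (fun y => if h : ∃ p, p < l ∧ f p = y then h.choose else 0)
    · intro y hy
      rw [Finset.mem_coe, Finset.mem_filter] at hy
      have hex : ∃ p, p < l ∧ f p = y := claimB y hy.1 hy.2
      dsimp only
      rw [dif_pos hex]
      obtain ⟨h1, h2⟩ := hex.choose_spec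
      rw [hTdef, Finset.mem_coe, Finset.mem_filter, Finset.mem_range]
      refine ⟨h1, ?_⟩
      rw [h2]
      exact hy.2
    · intro y1 h1 y2 h2 heq
      dsimp only at heq
      rw [Finset.mem_coe, Finset.mem_filter] at h1 h2
      have hex1 : ∃ p, p < l ∧ f p = y1 := claimB y1 h1.1 h1.2
      have hex2 : ∃ p, p < l ∧ f p = y2 := claimB y2 h2.1 h2.2
      rw [dif_pos hex1, dif_pos hex2] at heq
      obtain ⟨a1, b1⟩ := hex1.choose_spec
      obtain ⟨a2, b2⟩ := hex2.choose_spec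
      rw [← b1, ← b2, heq]
  have hST : ∃ i, i ∈ S ∧ i ∈ T := by
    by_contra hc
    push_neg at hc
    have hdisj : Disjoint S T := Finset.disjoint_left.2 (fun {i} hi hi' => (hc i hi) hi')
    have hsub : S ∪ T ⊆ Finset.range l :=
      Finset.union_subset (Finset.filter_subset _ _) (Finset.filter_subset _ _)
    have hle := Finset.card_le_card hsub
    rw [Finset.card_union_of_disjoint hdisj, Finset.card_range] at hle
    have h1 := hdeg (f 0) hf0s
    have h2 := hdeg (f l) hfls
    omega
  obtain ⟨i, hiS, hiT⟩ := hST
  rw [hSdef, Finset.mem_filter, Finset.mem_range] at hiS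
  rw [hTdef, Finset.mem_filter, Finset.mem_range] at hiT
  obtain ⟨hil, hadjS⟩ := hiS
  obtain ⟨-, hadjT⟩ := hiT
  -- the rotated cycle
  set cyc : ℕ → V := fun j => if j ≤ i then f j else f (l + i + 1 - j) with hcycdef
  have hcyc_mem : ∀ j, j ≤ l → cyc j ∈ s := by
    intro j hj
    rw [hcycdef]
    dsimp only
    split_ifs with h
    · exact hfmem j hj
    · exact hfmem _ (by omega)
  have hcyc_inj : ∀ j1, j1 ≤ l → ∀ j2, j2 ≤ l → cyc j1 = cyc j2 → j1 = j2 := by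
    intro j1 h1 j2 h2 he
    rw [hcycdef] at he
    dsimp only at he
    split_ifs at he with ha hb hb
    · exact hfinj j1 (by omega) j2 (by omega) he
    · have := hfinj j1 (by omega) (l + i + 1 - j2) (by omega) he; omega
    · have := hfinj (l + i + 1 - j1) (by omega) j2 (by omega) he; omega
    · have := hfinj (l + i + 1 - j1) (by omega) (l + i + 1 - j2) (by omega) he; omega
  have hcyc_surj : ∀ p, p ≤ l → ∃ q, q ≤ l ∧ cyc q = f p := by
    intro p hp
    by_cases h : p ≤ i
    · exact ⟨p, hp, by rw [hcycdef]; dsimp only; rw [if_pos h]⟩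
    · refine ⟨l + i + 1 - p, by omega, ?_⟩
      rw [hcycdef]
      dsimp only
      rw [if_neg (by omega)]
      congr 1
      omega
  set c : ℕ → V := fun m => cyc (m % (l + 1)) with hcdef
  have hmodle : ∀ m : ℕ, m % (l + 1) ≤ l := fun m => by
    have := Nat.mod_lt m (show 0 < l + 1 by omega); omega
  have hcadj : ∀ m, G.Adj (c m) (c (m + 1)) := by
    intro m
    rw [hcdef]
    dsimp only
    have hr := hmodle m
    have hm1 : (m + 1) % (l + 1) = if m % (l + 1) = l then 0 else m % (l + 1) + 1 := by
      rw [← Nat.mod_add_mod]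
      split_ifs with h
      · rw [h]; simp
      · exact Nat.mod_eq_of_lt (by omega)
    rw [hm1]
    set r := m % (l + 1) with hrdef
    split_ifs with hrl
    · rw [hrl, hcycdef]
      dsimp only
      rw [if_neg (by omega), if_pos (Nat.zero_le i)]
      have he : l + i + 1 - l = i + 1 := by omega
      rw [he]
      exact hadjS.symm
    · rcases lt_trichotomy r i with h | h | h
      · rw [hcycdef]
        dsimp only
        rw [if_pos (by omega), if_pos (by omega)]
        exact hfadj r (by omega)
      · rw [h, hcycdef]
        dsimp only
        rw [if_pos le_rfl, if_neg (by omega)]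
        have he : l + i + 1 - (i + 1) = l := by omega
        rw [he]
        exact hadjT.symm
      · rw [hcycdef]
        dsimp only
        rw [if_neg (by omega), if_neg (by omega)]
        have e1 : l + i + 1 - r = (l + i - r) + 1 := by omega
        have e2 : l + i + 1 - (r + 1) = l + i - r := by omega
        rw [e1, e2]
        exact (hfadj (l + i - r) (by omega)).symm
  -- a vertex outside the cycle adjacent to it
  set A := (Finset.range (l + 1)).image f with hAdef
  have hAs : A ⊆ s := by
    intro a ha
    rw [hAdef, Finset.mem_image] at ha
    obtain ⟨j, hj, rfl⟩ := ha
    rw [Finset.mem_range] at hj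
    exact hfmem j (by omega)
  have hAcard : A.card = l + 1 := by
    rw [hAdef, Finset.card_image_of_injOn, Finset.card_range]
    intro a ha b hb hab
    rw [Finset.mem_coe, Finset.mem_range] at ha hb
    exact hfinj a (by omega) b (by omega) hab
  have hAne : A.Nonempty := ⟨f 0, by rw [hAdef]; exact Finset.mem_image.2 ⟨0, by simp, rfl⟩⟩
  have hsAne : (s \ A).Nonempty := by
    rw [← Finset.card_pos, Finset.card_sdiff_of_subset hAs]
    omega
  obtain ⟨a, haA, y, hys, hyA, hadj_ay⟩ := hconn A hAs hAne hsAne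
  rw [hAdef, Finset.mem_image] at haA
  obtain ⟨p, hpmem, rfl⟩ := haA
  rw [Finset.mem_range] at hpmem
  obtain ⟨q, hq, hcq⟩ := hcyc_surj p (by omega)
  have hcA : ∀ m : ℕ, c m ∈ A := by
    intro m
    have h1 := hmodle m
    rw [hcdef]
    dsimp only
    rw [hcycdef]
    dsimp only
    rw [hAdef]
    split_ifs with h
    · exact Finset.mem_image.2 ⟨_, Finset.mem_range.2 (by omega), rfl⟩
    · exact Finset.mem_image.2 ⟨_, Finset.mem_range.2 (by omega), rfl⟩
  -- the longer path
  apply hnl1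
  refine ⟨fun t => if t = 0 then y else c (q + (t - 1)), ?_, ?_, ?_⟩
  · intro t ht
    dsimp only
    by_cases h0 : t = 0
    · rw [if_pos h0]; exact hys
    · rw [if_neg h0]
      exact hcyc_mem _ (hmodle _)
  · intro t1 ht1 t2 ht2 he
    dsimp only at he
    by_cases h1 : t1 = 0 <;> by_cases h2 : t2 = 0
    · omega
    · rw [if_pos h1, if_neg h2] at he
      exact absurd (by rw [he]; exact hcA _) hyA
    · rw [if_neg h1, if_pos h2] at he
      exact absurd (by rw [← he]; exact hcA _) hyA
    · rw [if_neg h1, if_neg h2] at he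
      have hmods := hcyc_inj _ (hmodle _) _ (hmodle _) he
      have hmeq : Nat.ModEq (l + 1) (q + (t1 - 1)) (q + (t2 - 1)) := hmods
      have h3 := Nat.ModEq.add_left_cancel' q hmeq
      have h4 : (t1 - 1) % (l + 1) = (t2 - 1) % (l + 1) := h3
      rw [Nat.mod_eq_of_lt (by omega), Nat.mod_eq_of_lt (by omega)] at h4
      omega
  · intro t ht
    dsimp only
    by_cases h0 : t = 0
    · subst h0
      rw [if_pos rfl, if_neg (by omega : ¬ (0 + 1 = 0))]
      have he : (0 : ℕ) + 1 - 1 = 0 := by omega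
      rw [he, Nat.add_zero, hcdef]
      dsimp only
      rw [Nat.mod_eq_of_lt (by omega), hcq]
      exact hadj_ay.symm
    · rw [if_neg h0, if_neg (by omega : ¬ (t + 1 = 0))]
      have he : q + (t + 1 - 1) = (q + (t - 1)) + 1 := by omega
      rw [he]
      exact hcadj (q + (t - 1))

theorem EG {k : ℕ} (hk : 1 ≤ k) (s : Finset V) (hnp : ¬ PathIn G s k) :
    2 * (edgesIn G s).card ≤ (k - 1) * s.card := by
  induction s using Finset.strongInduction with
  | _ s ih =>
  by_cases hsmall : s.card ≤ k
  · have h1 : 2 * (edgesIn G s).card = ∑ v ∈ s, degIn G s v := by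
      rw [← dartsIn_card_eq, card_dartsIn]
    rw [h1]
    calc ∑ v ∈ s, degIn G s v ≤ ∑ _v ∈ s, (k - 1) := by
          apply Finset.sum_le_sum
          intro v hv
          have := degIn_add_one_le (G := G) hv
          omega
      _ = s.card * (k - 1) := by rw [Finset.sum_const, smul_eq_mul]
      _ = (k - 1) * s.card := mul_comm _ _
  · push_neg at hsmall
    by_cases hlow : ∃ v ∈ s, 2 * degIn G s v + 1 ≤ k
    · obtain ⟨v, hv, hvdeg⟩ := hlow
      have hss : s.erase v ⊂ s := Finset.erase_ssubset hv
      have hIH := ih (s.erase v) hss (fun hp => hnp (pathIn_mono (Finset.erase_subset v s) hp))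
      have hkey := edgesIn_erase (G := G) hv
      have hcard := Finset.card_erase_add_one hv
      calc 2 * (edgesIn G s).card = 2 * (edgesIn G (s.erase v)).card + 2 * degIn G s v := by
            rw [hkey]; ring
        _ ≤ (k - 1) * (s.erase v).card + (k - 1) := by omega
        _ = (k - 1) * ((s.erase v).card + 1) := by ring
        _ = (k - 1) * s.card := by rw [hcard]
    · push_neg at hlow
      have hdeg : ∀ v ∈ s, k ≤ 2 * degIn G s v := fun v hv => by have := hlow v hv; omega
      have hne : s.Nonempty := Finset.card_pos.1 (by omega)
      obtain ⟨v₀, hv₀⟩ := hne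
      classical
      set C := s.filter (fun u => Relation.ReflTransGen (fun a b => b ∈ s ∧ G.Adj a b) v₀ u)
        with hCdef
      have hCs : C ⊆ s := Finset.filter_subset _ _
      have hcl : ∀ a ∈ C, ∀ b ∈ s, G.Adj a b → b ∈ C := by
        intro a ha b hb hadj
        rw [hCdef, Finset.mem_filter] at ha ⊢
        exact ⟨hb, ha.2.tail ⟨hb, hadj⟩⟩
      by_cases hC : C = s
      · exfalso
        apply EG_connected hk (by omega) hdeg ?_ hnp
        intro A hAs hA hsA
        apply crossing hv₀ ?_ hAs hA hsA
        intro u hu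
        have : u ∈ C := hC ▸ hu
        rw [hCdef, Finset.mem_filter] at this
        exact this.2
      · have hCss : C ⊂ s := lt_of_le_of_ne hCs hC
        have hCne : C.Nonempty := ⟨v₀, by
          rw [hCdef, Finset.mem_filter]; exact ⟨hv₀, Relation.ReflTransGen.refl⟩⟩
        have hsCss : s \ C ⊂ s := Finset.sdiff_ssubset hCs hCne
        have h1 := ih C hCss (fun hp => hnp (pathIn_mono hCs hp))
        have h2 := ih (s \ C) hsCss (fun hp => hnp (pathIn_mono (Finset.sdiff_subset) hp))
        have hsplit := edgesIn_split (G := G) hCs hcl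
        have hcards := Finset.card_sdiff_add_card_eq_card hCs
        calc 2 * (edgesIn G s).card
            = 2 * (edgesIn G C).card + 2 * (edgesIn G (s \ C)).card := by rw [hsplit]; ring
          _ ≤ (k - 1) * C.card + (k - 1) * (s \ C).card := by omega
          _ = (k - 1) * ((s \ C).card + C.card) := by ring
          _ = (k - 1) * s.card := by rw [hcards]

end Aux2

section Count
variable {V : Type*} [Fintype V] (G : SimpleGraph V) [DecidableEq V] [DecidableRel G.Adj]

def T3 : Finset (V × V × V) :=
  (Finset.univ ×ˢ Finset.univ ×ˢ Finset.univ).filter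
    fun p => G.Adj p.1 p.2.1 ∧ G.Adj p.1 p.2.2 ∧ G.Adj p.2.1 p.2.2

lemma edgesIn_univ : edgesIn G Finset.univ = G.edgeFinset := by
  ext e
  induction e with
  | _ a b =>
    rw [mem_edgesIn, mem_edgeFinset, mem_edgeSet]
    simp

lemma T3_card_eq_sum_darts :
    (T3 G).card = ∑ a : V, (dartsIn G (G.neighborFinset a)).card := by
  rw [T3, Finset.card_filter, Finset.sum_product]
  apply Finset.sum_congr rfl
  intro a _
  have hd : dartsIn G (G.neighborFinset a)
      = (Finset.univ ×ˢ Finset.univ).filter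
          (fun p : V × V => G.Adj a p.1 ∧ G.Adj a p.2 ∧ G.Adj p.1 p.2) := by
    ext ⟨b, c⟩
    simp only [mem_dartsIn, Finset.mem_filter, Finset.mem_product, Finset.mem_univ,
      true_and, mem_neighborFinset]
  rw [hd, Finset.card_filter]

lemma T3_card_eq_sum_codeg :
    (T3 G).card = ∑ p ∈ dartsIn G Finset.univ,
      (G.neighborFinset p.1 ∩ G.neighborFinset p.2).card := by
  rw [Finset.card_eq_sum_card_fiberwise
    (f := fun p : V × V × V => p.2) (t := dartsIn G Finset.univ)
    (fun p hp => by
      simp only [Finset.mem_coe, T3, Finset.mem_filter] at hp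
      exact Finset.mem_coe.2 (mem_dartsIn.2 ⟨Finset.mem_univ _, Finset.mem_univ _, hp.2.2.2⟩))]
  apply Finset.sum_congr rfl
  rintro ⟨b, c⟩ hbc
  rw [mem_dartsIn] at hbc
  rw [eq_comm]
  apply Finset.card_bij (fun a _ => (a, b, c))
  · intro a ha
    rw [Finset.mem_inter, mem_neighborFinset, mem_neighborFinset] at ha
    rw [Finset.mem_filter]
    refine ⟨?_, rfl⟩
    rw [T3, Finset.mem_filter]
    exact ⟨by simp, ha.1.symm, ha.2.symm, hbc.2.2⟩
  · intro a1 _ a2 _ h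
    exact congrArg (fun p : V × V × V => p.1) h
  · rintro ⟨p1, p2, p3⟩ hp
    rw [Finset.mem_filter, T3, Finset.mem_filter] at hp
    obtain ⟨⟨-, h1, h2, -⟩, h3⟩ := hp
    dsimp only at h1 h2 h3
    have hb : p2 = b := congrArg Prod.fst h3
    have hc : p3 = c := congrArg Prod.snd h3
    subst hb
    subst hc
    refine ⟨p1, ?_, rfl⟩
    rw [Finset.mem_inter, mem_neighborFinset, mem_neighborFinset]
    exact ⟨h1.symm, h2.symm⟩

lemma darts_sum_fst :
    ∑ p ∈ dartsIn G Finset.univ, G.degree p.1 = ∑ v : V, G.degree v * G.degree v := by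
  unfold dartsIn
  rw [Finset.sum_filter, Finset.sum_product]
  dsimp only
  apply Finset.sum_congr rfl
  intro x _
  rw [← Finset.sum_filter]
  show ∑ y ∈ Finset.univ.filter (fun y => G.Adj x y), G.degree x = _
  rw [Finset.sum_const, ← neighborFinset_eq_filter,
    card_neighborFinset_eq_degree, smul_eq_mul]

lemma darts_sum_snd :
    ∑ p ∈ dartsIn G Finset.univ, G.degree p.2 = ∑ v : V, G.degree v * G.degree v := by
  unfold dartsIn
  rw [Finset.sum_filter, Finset.sum_product]
  dsimp only
  rw [Finset.sum_comm]
  apply Finset.sum_congr rfl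
  intro y _
  calc ∑ x : V, (if G.Adj x y then G.degree y else 0)
      = ∑ x : V, (if G.Adj y x then G.degree y else 0) :=
        Finset.sum_congr rfl (fun x _ => if_congr (G.adj_comm x y) rfl rfl)
    _ = G.degree y * G.degree y := by
        rw [← Finset.sum_filter, Finset.sum_const, ← neighborFinset_eq_filter,
          card_neighborFinset_eq_degree, smul_eq_mul]

lemma darts_sum_deg :
    ∑ p ∈ dartsIn G Finset.univ, (G.degree p.1 + G.degree p.2)
      = 2 * ∑ v : V, G.degree v * G.degree v := by
  rw [Finset.sum_add_distrib, darts_sum_fst, darts_sum_snd]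
  ring

lemma deg_add_deg_le (b c : V) :
    G.degree b + G.degree c ≤ Fintype.card V
      + (G.neighborFinset b ∩ G.neighborFinset c).card := by
  have h := Finset.card_union_add_card_inter (G.neighborFinset b) (G.neighborFinset c)
  have h2 : (G.neighborFinset b ∪ G.neighborFinset c).card ≤ Fintype.card V := by
    rw [← Finset.card_univ]
    exact Finset.card_le_card (Finset.subset_univ _)
  rw [card_neighborFinset_eq_degree, card_neighborFinset_eq_degree] at h
  omega

lemma T3_card_lower :
    2 * ∑ v : V, G.degree v * G.degree v
      ≤ 2 * G.edgeFinset.card * Fintype.card V + (T3 G).card := by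
  have h1 : ∑ p ∈ dartsIn G Finset.univ, (G.degree p.1 + G.degree p.2)
      ≤ ∑ p ∈ dartsIn G Finset.univ,
          (Fintype.card V + (G.neighborFinset p.1 ∩ G.neighborFinset p.2).card) :=
    Finset.sum_le_sum (fun p _ => deg_add_deg_le G p.1 p.2)
  rw [darts_sum_deg] at h1
  rw [Finset.sum_add_distrib, Finset.sum_const, smul_eq_mul, ← T3_card_eq_sum_codeg] at h1
  have h2 : (dartsIn G Finset.univ).card = 2 * G.edgeFinset.card := by
    rw [dartsIn_card_eq, edgesIn_univ]
  rw [h2] at h1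
  exact h1

set_option maxHeartbeats 2000000 in
lemma T3_card_eq_six :
    (T3 G).card = 6 * (Finset.univ.filter fun t : Finset V => G.IsNClique 3 t).card := by
  have key : ∀ t ∈ Finset.univ.filter (fun t : Finset V => G.IsNClique 3 t),
      ((T3 G).filter (fun p : V × V × V => ({p.1, p.2.1, p.2.2} : Finset V) = t)).card = 6 := by
    intro t ht
    rw [Finset.mem_filter] at ht
    obtain ⟨x, y, z, hxy, hxz, hyz, rfl⟩ := is3Clique_iff.1 ht.2
    have hnxy : x ≠ y := hxy.ne
    have hnxz : x ≠ z := hxz.ne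
    have hnyz : y ≠ z := hyz.ne
    have hnyx : y ≠ x := hnxy.symm
    have hnzx : z ≠ x := hnxz.symm
    have hnzy : z ≠ y := hnyz.symm
    have hfib : (T3 G).filter (fun p : V × V × V => ({p.1, p.2.1, p.2.2} : Finset V) = {x, y, z})
        = {(x,y,z), (x,z,y), (y,x,z), (y,z,x), (z,x,y), (z,y,x)} := by
      ext ⟨a, b, c⟩
      simp only [Finset.mem_filter, T3, Finset.mem_product, Finset.mem_univ, true_and,
        Finset.mem_insert, Finset.mem_singleton, Prod.mk.injEq]
      constructor
      · rintro ⟨⟨hab, hac, hbc⟩, hset⟩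
        have ha : a = x ∨ a = y ∨ a = z := by
          have h : a ∈ ({x, y, z} : Finset V) := hset ▸ (by simp)
          simpa using h
        have hb : b = x ∨ b = y ∨ b = z := by
          have h : b ∈ ({x, y, z} : Finset V) := hset ▸ (by simp)
          simpa using h
        have hc : c = x ∨ c = y ∨ c = z := by
          have h : c ∈ ({x, y, z} : Finset V) := hset ▸ (by simp)
          simpa using h
        have hab' : a ≠ b := hab.ne
        have hac' : a ≠ c := hac.ne
        have hbc' : b ≠ c := hbc.ne
        rcases ha with rfl|rfl|rfl <;> rcases hb with rfl|rfl|rfl <;>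
          rcases hc with rfl|rfl|rfl <;> tauto
      · rintro (⟨rfl, rfl, rfl⟩|⟨rfl, rfl, rfl⟩|⟨rfl, rfl, rfl⟩|⟨rfl, rfl, rfl⟩|
          ⟨rfl, rfl, rfl⟩|⟨rfl, rfl, rfl⟩) <;>
          refine ⟨⟨?_, ?_, ?_⟩, ?_⟩ <;>
          first
            | assumption
            | exact hxy.symm
            | exact hxz.symm
            | exact hyz.symm
            | (ext w; simp only [Finset.mem_insert, Finset.mem_singleton]; try tauto)
    rw [hfib]
    rw [Finset.card_insert_of_notMem
        (by simp [Prod.ext_iff, hnxy, hnxz, hnyz, hnyx, hnzx, hnzy]),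
      Finset.card_insert_of_notMem
        (by simp [Prod.ext_iff, hnxy, hnxz, hnyz, hnyx, hnzx, hnzy]),
      Finset.card_insert_of_notMem
        (by simp [Prod.ext_iff, hnxy, hnxz, hnyz, hnyx, hnzx, hnzy]),
      Finset.card_insert_of_notMem
        (by simp [Prod.ext_iff, hnxy, hnxz, hnyz, hnyx, hnzx, hnzy]),
      Finset.card_insert_of_notMem
        (by simp [Prod.ext_iff, hnxy, hnxz, hnyz, hnyx, hnzx, hnzy]),
      Finset.card_singleton]
  rw [Finset.card_eq_sum_card_fiberwise
    (f := fun p : V × V × V => ({p.1, p.2.1, p.2.2} : Finset V))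
    (t := Finset.univ.filter fun t => G.IsNClique 3 t)
    (fun p hp => by
      simp only [Finset.mem_coe, T3, Finset.mem_filter] at hp
      rw [Finset.mem_coe, Finset.mem_filter]
      exact ⟨Finset.mem_univ _, is3Clique_triple_iff.2 ⟨hp.2.1, hp.2.2.1, hp.2.2.2⟩⟩)]
  rw [Finset.sum_congr rfl key, Finset.sum_const, smul_eq_mul, mul_comm]

end Count

section Final
variable {V : Type*} [Fintype V]

lemma triCount_eq (G : SimpleGraph V) [DecidableEq V] [DecidableRel G.Adj] :
    triCount G = (Finset.univ.filter fun t : Finset V => G.IsNClique 3 t).card := by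
  rw [triCount]
  have h : {s : Finset V | G.IsNClique 3 s}
      = ↑(Finset.univ.filter fun t : Finset V => G.IsNClique 3 t) := by
    ext t
    simp
  rw [h, Set.ncard_coe_finset]

lemma edgeCount_eq (G : SimpleGraph V) [DecidableRel G.Adj] :
    edgeCount G = G.edgeFinset.card := by
  have h : G.edgeSet = ↑G.edgeFinset := by
    simp
  rw [edgeCount, h, Set.ncard_coe_finset]

theorem suspension_path_upper' {V : Type*} [Fintype V] (G : SimpleGraph V) (k : ℕ)
    (hk : 3 ≤ k) (hn : k ≤ Fintype.card V)
    (hfree : ¬ containsCopy (susp (pathGraph (k + 1))) G) :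
    (triCount G : ℝ) ≤ ((k : ℝ) - 1) / 12 * (Fintype.card V : ℝ) ^ 2 +
      ((k : ℝ) - 1) ^ 2 / 12 * (Fintype.card V : ℝ) := by
  classical
  have hnopath : ∀ v : V, ¬ PathIn G (G.neighborFinset v) k := by
    intro v hp
    obtain ⟨f, hmem, hinj, hadj⟩ := hp
    apply hfree
    refine ⟨⟨fun o => o.elim v (fun i => f i.val), ?_⟩, ?_⟩
    · rintro (_ | x) (_ | y) h
      · exact h.elim
      · exact (mem_neighborFinset _ _ _).1 (hmem y.val (Nat.lt_succ_iff.mp y.isLt))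
      · exact ((mem_neighborFinset _ _ _).1 (hmem x.val (Nat.lt_succ_iff.mp x.isLt))).symm
      · have h' : (pathGraph (k + 1)).Adj x y := h
        rw [pathGraph_adj] at h'
        rcases h' with h' | h'
        · have hh := hadj x.val (by have hy := y.isLt; omega)
          rw [h'] at hh
          exact hh
        · have hh := hadj y.val (by have hx := x.isLt; omega)
          rw [h'] at hh
          exact hh.symm
    · intro a b hab
      cases a with
      | none =>
        cases b with
        | none => rfl
        | some x =>
          exfalso
          have hx : f x.val ∈ G.neighborFinset v := hmem x.val (Nat.lt_succ_iff.mp x.isLt)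
          have hab' : v = f x.val := hab
          rw [← hab'] at hx
          exact G.irrefl ((mem_neighborFinset _ _ _).1 hx)
      | some x =>
        cases b with
        | none =>
          exfalso
          have hx : f x.val ∈ G.neighborFinset v := hmem x.val (Nat.lt_succ_iff.mp x.isLt)
          have hab' : f x.val = v := hab
          rw [hab'] at hx
          exact G.irrefl ((mem_neighborFinset _ _ _).1 hx)
        | some y =>
          have hab' : f x.val = f y.val := hab
          have := hinj x.val (Nat.lt_succ_iff.mp x.isLt) y.val (Nat.lt_succ_iff.mp y.isLt) hab'
          exact congrArg some (Fin.ext this)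
  have hEG : ∀ v : V, 2 * (edgesIn G (G.neighborFinset v)).card ≤ (k - 1) * G.degree v := by
    intro v
    have h := EG (G := G) (by omega : 1 ≤ k) (G.neighborFinset v) (hnopath v)
    rwa [card_neighborFinset_eq_degree] at h
  have h6t : (T3 G).card ≤ (k - 1) * (2 * G.edgeFinset.card) := by
    rw [T3_card_eq_sum_darts]
    calc ∑ a : V, (dartsIn G (G.neighborFinset a)).card
        = ∑ a : V, 2 * (edgesIn G (G.neighborFinset a)).card := by
          exact Finset.sum_congr rfl (fun a _ => dartsIn_card_eq _)
      _ ≤ ∑ a : V, (k - 1) * G.degree a := Finset.sum_le_sum (fun a _ => hEG a)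
      _ = (k - 1) * ∑ a : V, G.degree a := by rw [Finset.mul_sum]
      _ = (k - 1) * (2 * G.edgeFinset.card) := by rw [G.sum_degrees_eq_twice_card_edges]
  have hlow := T3_card_lower G
  set n := Fintype.card V with hndef
  set e := G.edgeFinset.card with hedef
  set t := (Finset.univ.filter fun s : Finset V => G.IsNClique 3 s).card with htdef
  have h6 : (T3 G).card = 6 * t := T3_card_eq_six G
  rw [h6] at h6t hlow
  -- cast everything to ℝ
  have hkR : (1 : ℝ) ≤ (k : ℝ) := by exact_mod_cast (by omega : 1 ≤ k)
  have hkcast : ((k - 1 : ℕ) : ℝ) = (k : ℝ) - 1 := by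
    rw [Nat.cast_sub (by omega : 1 ≤ k)]
    norm_num
  have h6tR : 6 * (t : ℝ) ≤ ((k : ℝ) - 1) * (2 * (e : ℝ)) := by
    rw [← hkcast]
    exact_mod_cast h6t
  have hcs : (2 * (e : ℝ)) ^ 2 ≤ (n : ℝ) * ∑ v : V, ((G.degree v : ℝ)) ^ 2 := by
    have h := sq_sum_le_card_mul_sum_sq (s := (Finset.univ : Finset V))
      (f := fun v : V => (G.degree v : ℝ))
    rw [Finset.card_univ] at h
    have hhs : ∑ v : V, (G.degree v : ℝ) = 2 * (e : ℝ) := by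
      rw [hedef]
      exact_mod_cast congrArg (Nat.cast (R := ℝ)) G.sum_degrees_eq_twice_card_edges
    rw [← hhs]
    exact h
  have hlowR : 2 * ∑ v : V, ((G.degree v : ℝ)) ^ 2 ≤ 2 * (e : ℝ) * (n : ℝ) + 6 * (t : ℝ) := by
    have h : ((2 * ∑ v : V, G.degree v * G.degree v : ℕ) : ℝ)
        ≤ ((2 * e * n + 6 * t : ℕ) : ℝ) := by exact_mod_cast hlow
    push_cast at h
    calc 2 * ∑ v : V, ((G.degree v : ℝ)) ^ 2
        = 2 * ∑ v : V, ((G.degree v : ℝ) * (G.degree v : ℝ)) := by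
          congr 1
          exact Finset.sum_congr rfl (fun v _ => pow_two _)
      _ ≤ 2 * (e : ℝ) * (n : ℝ) + 6 * (t : ℝ) := by linarith [h]
  have hnR : (0 : ℝ) ≤ (n : ℝ) := Nat.cast_nonneg n
  have heR : (0 : ℝ) ≤ (e : ℝ) := Nat.cast_nonneg e
  have htR : (0 : ℝ) ≤ (t : ℝ) := Nat.cast_nonneg t
  have hgoal : (t : ℝ) ≤ ((k : ℝ) - 1) / 12 * (n : ℝ) ^ 2 + ((k : ℝ) - 1) ^ 2 / 12 * (n : ℝ) := by
    have h8 : 8 * (e : ℝ) ^ 2 ≤ 2 * (e : ℝ) * (n : ℝ) ^ 2 + 6 * (t : ℝ) * (n : ℝ) := by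
      nlinarith [mul_le_mul_of_nonneg_left hlowR hnR, hcs]
    have hk1 : (0 : ℝ) ≤ (k : ℝ) - 1 := by linarith
    rcases eq_or_lt_of_le heR with he0 | hepos
    · have he0' : (e : ℝ) = 0 := he0.symm
      rw [he0'] at h6tR
      norm_num at h6tR
      have h1 : (0 : ℝ) ≤ ((k : ℝ) - 1) / 12 * (n : ℝ) ^ 2 :=
        mul_nonneg (div_nonneg hk1 (by norm_num)) (sq_nonneg _)
      have h2 : (0 : ℝ) ≤ ((k : ℝ) - 1) ^ 2 / 12 * (n : ℝ) :=
        mul_nonneg (div_nonneg (sq_nonneg _) (by norm_num)) hnR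
      linarith
    · have h4e : 4 * (e : ℝ) ≤ (n : ℝ) ^ 2 + ((k : ℝ) - 1) * (n : ℝ) := by
        nlinarith [h8, mul_le_mul_of_nonneg_left h6tR hnR, hepos]
      have hfin := mul_le_mul_of_nonneg_left h4e hk1
      linarith [h6tR, hfin]
  rw [triCount_eq]
  exact hgoal

end Final

/-- If `G` on `n ≥ k` vertices is `\widehat{P}_k`-free (`k ≥ 3`), then
`t(G) ≤ ((k-1)/12)n² + ((k-1)²/12)n`. -/
theorem suspension_path_upper {V : Type*} [Fintype V] (G : SimpleGraph V) (k : ℕ)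
    (hk : 3 ≤ k) (hn : k ≤ Fintype.card V)
    (hfree : ¬ containsCopy (susp (pathGraph (k + 1))) G) :
    (triCount G : ℝ) ≤ ((k : ℝ) - 1) / 12 * (Fintype.card V : ℝ) ^ 2 +
      ((k : ℝ) - 1) ^ 2 / 12 * (Fintype.card V : ℝ) := by
  exact suspension_path_upper' G k hk hn hfree
end

section
/- If G is a \widehat{P}_3-free graph on n \ge 3 vertices, then t(G) < n^2/8 + 3n. -/
open SimpleGraph

/-! ### Auxiliary development -/

open Finset
open scoped Classical
set_option linter.unusedSectionVars false

namespace SuspP3Aux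

variable {V : Type*} [Fintype V] {G : SimpleGraph V}

/-- Key configuration lemma: an apex `v` joined to a path `a-b-c-d` yields a copy of
`susp (pathGraph 4)`. -/
lemma apexP4 (hfree : ¬ containsCopy (susp (pathGraph 4)) G)
    {v a b c d : V} (hva : G.Adj v a) (hvb : G.Adj v b) (hvc : G.Adj v c) (hvd : G.Adj v d)
    (hab : G.Adj a b) (hbc : G.Adj b c) (hcd : G.Adj c d)
    (hac : a ≠ c) (had : a ≠ d) (hbd : b ≠ d) : False := by
  apply hfree
  have hAll : ∀ i : Fin 4, G.Adj v (![a,b,c,d] i) := by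
    intro i; fin_cases i <;> assumption
  refine ⟨⟨fun o => Option.elim o v (fun i => ![a,b,c,d] i), ?_⟩, ?_⟩
  · rintro (_|i) (_|j) h
    · exact absurd h (by simp [susp])
    · exact hAll j
    · exact (hAll i).symm
    · have h' : (pathGraph 4).Adj i j := h
      rw [pathGraph_adj] at h'
      simp only [Option.elim]
      fin_cases i <;> fin_cases j <;> simp only [Fin.isValue, Fin.val_zero, Fin.val_one,
          Fin.val_two, Matrix.cons_val_zero, Matrix.cons_val_one, Matrix.head_cons,
          Matrix.cons_val_two, Matrix.tail_cons, Matrix.cons_val_three, Matrix.head_fin_const]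
          at h' ⊢ <;>
        first
        | exact hab | exact hbc | exact hcd
        | exact hab.symm | exact hbc.symm | exact hcd.symm
        | omega
  · have key : ∀ i j : Fin 4, (![a,b,c,d] i = ![a,b,c,d] j) → i = j := by
      intro i j hij
      fin_cases i <;> fin_cases j <;> revert hij <;>
        simp only [Matrix.cons_val_zero, Matrix.cons_val_one, Matrix.head_cons,
          Matrix.cons_val_two, Matrix.tail_cons, Matrix.cons_val_three, Matrix.head_fin_const] <;>
        intro hij <;>
        first
        | trivial
        | exact absurd hij hab.ne | exact absurd hij hbc.ne | exact absurd hij hcd.ne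
        | exact absurd hij hac | exact absurd hij had | exact absurd hij hbd
        | exact absurd hij.symm hab.ne | exact absurd hij.symm hbc.ne
        | exact absurd hij.symm hcd.ne | exact absurd hij.symm hac
        | exact absurd hij.symm had | exact absurd hij.symm hbd
    rintro (_|i) (_|j) hxy
    · rfl
    · exact absurd hxy (hAll j).ne
    · exact absurd hxy.symm (hAll i).ne
    · exact congrArg some (key i j hxy)

/-- The common-neighbour finset. -/
noncomputable def cdgS (G : SimpleGraph V) (u v : V) : Finset V :=
  Finset.univ.filter (fun w => G.Adj u w ∧ G.Adj v w)

/-- The codegree (finset version). -/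
noncomputable def cdg (G : SimpleGraph V) (u v : V) : ℕ := (cdgS G u v).card

lemma mem_cdgS {u v w : V} : w ∈ cdgS G u v ↔ G.Adj u w ∧ G.Adj v w := by
  simp [cdgS]

lemma cdg_comm (u v : V) : cdg G u v = cdg G v u := by
  unfold cdg cdgS; congr 1; ext w; simp [and_comm]

lemma one_le_cdg {u v w : V} (huw : G.Adj u w) (hvw : G.Adj v w) : 1 ≤ cdg G u v :=
  Finset.card_pos.mpr ⟨w, mem_cdgS.mpr ⟨huw, hvw⟩⟩

/-- Lemma 2: if an edge `vw` of a triangle `uvw` has codegree at least 3, then the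
edge `uv` has codegree exactly 1. -/
lemma L2 (hfree : ¬ containsCopy (susp (pathGraph 4)) G) {u v w : V}
    (huv : G.Adj u v) (huw : G.Adj u w) (hvw : G.Adj v w)
    (h3 : 3 ≤ cdg G v w) : cdg G u v = 1 := by
  refine le_antisymm ?_ (one_le_cdg huw hvw)
  by_contra hgt
  push_neg at hgt
  obtain ⟨x, hx, hxw⟩ := Finset.exists_mem_ne hgt w
  obtain ⟨hux, hvx⟩ := mem_cdgS.mp hx
  have hsd : 1 ≤ ((cdgS G v w) \ {u, x}).card := by
    have h1 := Finset.le_card_sdiff ({u, x} : Finset V) (cdgS G v w)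
    have h2 : ({u, x} : Finset V).card ≤ 2 := card_insert_le .. |>.trans (by simp)
    have : 3 ≤ (cdgS G v w).card := h3
    omega
  obtain ⟨p, hp⟩ := Finset.card_pos.mp hsd
  rw [Finset.mem_sdiff, mem_cdgS, Finset.mem_insert, Finset.mem_singleton] at hp
  obtain ⟨⟨hvp, hwp⟩, hpux⟩ := hp
  push_neg at hpux
  exact apexP4 hfree hvx huv.symm hvw hvp hux.symm huw hwp hxw
    (fun h => hpux.2 h.symm) (fun h => hpux.1 h.symm)

/-- Lemma 3: two codegree-≥2 edges of a triangle force a `K₄`. -/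
lemma L3 (hfree : ¬ containsCopy (susp (pathGraph 4)) G) {u v w : V}
    (huv : G.Adj u v) (huw : G.Adj u w) (hvw : G.Adj v w)
    (h1 : 2 ≤ cdg G u v) (h2 : 2 ≤ cdg G v w) :
    ∃ x, x ≠ u ∧ x ≠ v ∧ x ≠ w ∧ G.Adj x u ∧ G.Adj x v ∧ G.Adj x w := by
  obtain ⟨x, hx, hxw⟩ := Finset.exists_mem_ne h1 w
  obtain ⟨hux, hvx⟩ := mem_cdgS.mp hx
  obtain ⟨y, hy, hyu⟩ := Finset.exists_mem_ne h2 u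
  obtain ⟨hvy, hwy⟩ := mem_cdgS.mp hy
  by_cases hxy : x = y
  · subst hxy
    exact ⟨x, hux.ne', hvx.ne', hxw, hux.symm, hvx.symm, hwy.symm⟩
  · exact absurd (apexP4 hfree hvx huv.symm hvw hvy hux.symm huw hwy hxw hxy hyu.symm) id

/-- Lemma 4: an edge of a `K₄` has codegree exactly 2. -/
lemma L4 (hfree : ¬ containsCopy (susp (pathGraph 4)) G) {a b c d : V}
    (hab : G.Adj a b) (hac : G.Adj a c) (had : G.Adj a d)
    (hbc : G.Adj b c) (hbd : G.Adj b d) (hcd : G.Adj c d) : cdg G a b = 2 := by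
  have hsub : ({c, d} : Finset V) ⊆ cdgS G a b := by
    intro z hz
    rw [Finset.mem_insert, Finset.mem_singleton] at hz
    rcases hz with rfl | rfl
    · exact mem_cdgS.mpr ⟨hac, hbc⟩
    · exact mem_cdgS.mpr ⟨had, hbd⟩
  have h2 : 2 ≤ cdg G a b := by
    have := Finset.card_le_card hsub
    rwa [Finset.card_pair hcd.ne] at this
  refine le_antisymm ?_ h2
  by_contra hgt
  push_neg at hgt
  have h1 : cdg G c a = 1 := L2 hfree hac.symm hbc.symm hab (by omega)
  have : 2 ≤ cdg G c a := by
    have hsub2 : ({b, d} : Finset V) ⊆ cdgS G c a := by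
      intro z hz
      rw [Finset.mem_insert, Finset.mem_singleton] at hz
      rcases hz with rfl | rfl
      · exact mem_cdgS.mpr ⟨hbc.symm, hab⟩
      · exact mem_cdgS.mpr ⟨hcd, had⟩
    have := Finset.card_le_card hsub2
    rwa [Finset.card_pair hbd.ne] at this
  omega

/-- The `r`-cliques inside `s`. -/
noncomputable def cIn (G : SimpleGraph V) (r : ℕ) (s : Finset V) : Finset (Finset V) :=
  (s.powersetCard r).filter (fun p => G.IsClique (p : Set V))

lemma mem_cIn {r : ℕ} {s p : Finset V} :
    p ∈ cIn G r s ↔ p ⊆ s ∧ p.card = r ∧ G.IsClique (p : Set V) := by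
  simp [cIn, Finset.mem_powersetCard, and_assoc]

lemma clique_adj {p : Finset V} (hp : G.IsClique (p : Set V)) {x y : V}
    (hx : x ∈ p) (hy : y ∈ p) (hne : x ≠ y) : G.Adj x y :=
  hp (by simpa using hx) (by simpa using hy) hne

lemma pair_clique {u v : V} (h : G.Adj u v) :
    G.IsClique (({u, v} : Finset V) : Set V) := by
  rw [Finset.coe_insert, Finset.coe_singleton]
  exact isClique_pair.mpr (fun _ => h)

lemma pair_mem_cIn {u v : V} (h : G.Adj u v) (s : Finset V) (hu : u ∈ s) (hv : v ∈ s) :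
    ({u, v} : Finset V) ∈ cIn G 2 s := by
  refine mem_cIn.mpr ⟨?_, Finset.card_pair h.ne, pair_clique h⟩
  intro z hz
  rw [Finset.mem_insert, Finset.mem_singleton] at hz
  rcases hz with rfl | rfl <;> assumption

/-- Extract the third vertex of a triangle containing a given pair. -/
lemma third_vertex {s T : Finset V} {u v : V} (hT : T ∈ cIn G 3 s)
    (huv : u ≠ v) (hsub : ({u, v} : Finset V) ⊆ T) :
    ∃ w, w ∉ ({u, v} : Finset V) ∧ T = {u, v, w} ∧ G.Adj u w ∧ G.Adj v w := by
  obtain ⟨-, hcard, hclique⟩ := mem_cIn.mp hT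
  have hc2 : ({u, v} : Finset V).card = 2 := Finset.card_pair huv
  have hsd : (T \ {u, v}).card = 1 := by
    rw [Finset.card_sdiff_of_subset hsub, hcard, hc2]
  obtain ⟨w, hw⟩ := Finset.card_eq_one.mp hsd
  have hwmem : w ∈ T \ ({u, v} : Finset V) := by rw [hw]; exact Finset.mem_singleton_self w
  rw [Finset.mem_sdiff] at hwmem
  obtain ⟨hwT, hwuv⟩ := hwmem
  have hwu : w ≠ u := fun h => hwuv (by rw [h]; simp)
  have hwv : w ≠ v := fun h => hwuv (by rw [h]; simp)
  have hu : u ∈ T := hsub (by simp)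
  have hv : v ∈ T := hsub (by simp)
  refine ⟨w, hwuv, ?_, clique_adj hclique hu hwT hwu.symm, clique_adj hclique hv hwT hwv.symm⟩
  have : T = ({u, v} : Finset V) ∪ (T \ {u, v}) := (Finset.union_sdiff_of_subset hsub).symm
  rw [this, hw]
  ext z; simp [or_assoc]

/-- An edge of codegree 1 lies in exactly one triangle. -/
lemma E1_unique {s : Finset V} {T T' : Finset V} {u v : V} (huv : u ≠ v)
    (h1 : cdg G u v = 1)
    (hT : T ∈ cIn G 3 s) (hT' : T' ∈ cIn G 3 s)
    (hsub : ({u, v} : Finset V) ⊆ T) (hsub' : ({u, v} : Finset V) ⊆ T') : T = T' := by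
  obtain ⟨w, hw, rfl, h1w, h2w⟩ := third_vertex hT huv hsub
  obtain ⟨w', hw', rfl, h1w', h2w'⟩ := third_vertex hT' huv hsub'
  by_contra hne
  have hww : w ≠ w' := by
    intro h; exact hne (by rw [h])
  have : 2 ≤ cdg G u v := by
    apply Finset.one_lt_card_iff.mpr
    exact ⟨w, w', mem_cdgS.mpr ⟨h1w, h2w⟩, mem_cdgS.mpr ⟨h1w', h2w'⟩, hww⟩
  omega

/-- Codegree-2 lemma for `K₄`s, finset version. -/
lemma L4K (hfree : ¬ containsCopy (susp (pathGraph 4)) G) {s K : Finset V}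
    (hK : K ∈ cIn G 4 s) {u v : V} (hu : u ∈ K) (hv : v ∈ K) (huv : u ≠ v) :
    cdg G u v = 2 ∧ K \ {u, v} ⊆ cdgS G u v := by
  obtain ⟨-, hcard, hclique⟩ := mem_cIn.mp hK
  have hsub : ({u, v} : Finset V) ⊆ K := by
    intro z hz; rw [Finset.mem_insert, Finset.mem_singleton] at hz
    rcases hz with rfl | rfl <;> assumption
  have hsd : (K \ {u, v}).card = 2 := by
    rw [Finset.card_sdiff_of_subset hsub, hcard, Finset.card_pair huv]
  obtain ⟨c, d, hcd, hcdeq⟩ := Finset.card_eq_two.mp hsd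
  have hcmem : c ∈ K \ ({u, v} : Finset V) := by rw [hcdeq]; simp
  have hdmem : d ∈ K \ ({u, v} : Finset V) := by rw [hcdeq]; simp
  rw [Finset.mem_sdiff] at hcmem hdmem
  have hcu : c ≠ u := fun h => hcmem.2 (by rw [h]; simp)
  have hcv : c ≠ v := fun h => hcmem.2 (by rw [h]; simp)
  have hdu : d ≠ u := fun h => hdmem.2 (by rw [h]; simp)
  have hdv : d ≠ v := fun h => hdmem.2 (by rw [h]; simp)
  have hadj : ∀ {x y : V}, x ∈ K → y ∈ K → x ≠ y → G.Adj x y :=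
    fun hx hy hne => clique_adj hclique hx hy hne
  have hsubS : K \ {u, v} ⊆ cdgS G u v := by
    intro z hz
    rw [Finset.mem_sdiff] at hz
    have hzu : z ≠ u := fun h => hz.2 (by rw [h]; simp)
    have hzv : z ≠ v := fun h => hz.2 (by rw [h]; simp)
    exact mem_cdgS.mpr ⟨hadj hu hz.1 hzu.symm |>.symm |>.symm,
      hadj hv hz.1 hzv.symm |>.symm |>.symm⟩
  refine ⟨L4 hfree (hadj hu hv huv) (hadj hu hcmem.1 hcu.symm) (hadj hu hdmem.1 hdu.symm)
    (hadj hv hcmem.1 hcv.symm) (hadj hv hdmem.1 hdv.symm) (hadj hcmem.1 hdmem.1 hcd), hsubS⟩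

/-- Two distinct `K₄`s share at most one vertex. -/
lemma L6 (hfree : ¬ containsCopy (susp (pathGraph 4)) G) {s s' K K' : Finset V}
    (hK : K ∈ cIn G 4 s) (hK' : K' ∈ cIn G 4 s') (hne : K ≠ K')
    {u v : V} (huv : u ≠ v)
    (hu : u ∈ K) (hv : v ∈ K) (hu' : u ∈ K') (hv' : v ∈ K') : False := by
  obtain ⟨hc2, hS⟩ := L4K hfree hK hu hv huv
  obtain ⟨-, hS'⟩ := L4K hfree hK' hu' hv' huv
  have hsub : ({u, v} : Finset V) ⊆ K := by
    intro z hz; rw [Finset.mem_insert, Finset.mem_singleton] at hz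
    rcases hz with rfl | rfl <;> assumption
  have hsub' : ({u, v} : Finset V) ⊆ K' := by
    intro z hz; rw [Finset.mem_insert, Finset.mem_singleton] at hz
    rcases hz with rfl | rfl <;> assumption
  have hKcard := (mem_cIn.mp hK).2.1
  have hK'card := (mem_cIn.mp hK').2.1
  have hsdne : K \ {u, v} ≠ K' \ {u, v} := by
    intro h
    apply hne
    have : ({u,v} : Finset V) ∪ (K \ {u,v}) = ({u,v} : Finset V) ∪ (K' \ {u,v}) := by rw [h]
    rwa [Finset.union_sdiff_of_subset hsub, Finset.union_sdiff_of_subset hsub'] at this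
  have hcard1 : (K \ {u, v}).card = 2 := by
    rw [Finset.card_sdiff_of_subset hsub, hKcard, Finset.card_pair huv]
  have hcard2 : (K' \ {u, v}).card = 2 := by
    rw [Finset.card_sdiff_of_subset hsub', hK'card, Finset.card_pair huv]
  have hunion : (K \ {u,v}) ∪ (K' \ {u,v}) ⊆ cdgS G u v := Finset.union_subset hS hS'
  have h3 : 3 ≤ ((K \ {u,v}) ∪ (K' \ {u,v})).card := by
    by_contra hlt
    push_neg at hlt
    have hsub1 : (K \ {u,v}) ⊆ (K \ {u,v}) ∪ (K' \ {u,v}) := Finset.subset_union_left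
    have hsub2 : (K' \ {u,v}) ⊆ (K \ {u,v}) ∪ (K' \ {u,v}) := Finset.subset_union_right
    have e1 : (K \ {u,v}) = (K \ {u,v}) ∪ (K' \ {u,v}) :=
      Finset.eq_of_subset_of_card_le hsub1 (by omega)
    have e2 : (K' \ {u,v}) = (K \ {u,v}) ∪ (K' \ {u,v}) :=
      Finset.eq_of_subset_of_card_le hsub2 (by omega)
    exact hsdne (e1.trans e2.symm)
  have := Finset.card_le_card hunion
  unfold cdg at hc2
  omega

section Counting
variable (G)

/-- Triangles contained in a `K₄`. -/
noncomputable def TBs : Finset (Finset V) :=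
  (cIn G 3 Finset.univ).filter (fun T => ∃ K ∈ cIn G 4 Finset.univ, T ⊆ K)

/-- Triangles not contained in any `K₄`. -/
noncomputable def TAs : Finset (Finset V) :=
  (cIn G 3 Finset.univ).filter (fun T => ¬ ∃ K ∈ cIn G 4 Finset.univ, T ⊆ K)

/-- Edges of codegree 1. -/
noncomputable def E1s : Finset (Finset V) :=
  (cIn G 2 Finset.univ).filter (fun p => ∃ u v : V, u ≠ v ∧ p = {u, v} ∧ cdg G u v = 1)

variable {G}

lemma TB_card_le : (TBs G).card ≤ 4 * (cIn G 4 Finset.univ).card := by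
  have hsub : TBs G ⊆ (cIn G 4 Finset.univ).biUnion (fun K => K.powersetCard 3) := by
    intro T hT
    rw [TBs, Finset.mem_filter] at hT
    obtain ⟨hT3, K, hK, hTK⟩ := hT
    exact Finset.mem_biUnion.mpr ⟨K, hK, Finset.mem_powersetCard.mpr
      ⟨hTK, (mem_cIn.mp hT3).2.1⟩⟩
  calc (TBs G).card ≤ _ := Finset.card_le_card hsub
    _ ≤ ∑ K ∈ cIn G 4 Finset.univ, (K.powersetCard 3).card := Finset.card_biUnion_le
    _ = ∑ K ∈ cIn G 4 Finset.univ, 4 := by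
        refine Finset.sum_congr rfl (fun K hK => ?_)
        rw [Finset.card_powersetCard, (mem_cIn.mp hK).2.1]
        decide
    _ = 4 * (cIn G 4 Finset.univ).card := by rw [Finset.sum_const, smul_eq_mul, mul_comm]

lemma TA_two (hfree : ¬ containsCopy (susp (pathGraph 4)) G) {T : Finset V}
    (hTA : T ∈ TAs G) : 2 ≤ ((E1s G).filter (· ⊆ T)).card := by
  rw [TAs, Finset.mem_filter] at hTA
  obtain ⟨hT3, hnK⟩ := hTA
  obtain ⟨hTu, hTcard, hTclique⟩ := mem_cIn.mp hT3
  obtain ⟨u, v, w, huv, huw, hvw, rfl⟩ := Finset.card_eq_three.mp hTcard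
  have hu : u ∈ ({u, v, w} : Finset V) := by simp
  have hv : v ∈ ({u, v, w} : Finset V) := by simp
  have hw : w ∈ ({u, v, w} : Finset V) := by simp
  have auv : G.Adj u v := clique_adj hTclique hu hv huv
  have auw : G.Adj u w := clique_adj hTclique hu hw huw
  have avw : G.Adj v w := clique_adj hTclique hv hw hvw
  -- no K4 extension
  have hnoK : ∀ x, x ≠ u → x ≠ v → x ≠ w → G.Adj x u → G.Adj x v → G.Adj x w → False := by
    intro x hxu hxv hxw axu axv axw
    apply hnK
    refine ⟨insert x {u, v, w}, mem_cIn.mpr ⟨Finset.subset_univ _, ?_, ?_⟩,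
      Finset.subset_insert _ _⟩
    · rw [Finset.card_insert_of_notMem (by simp [hxu, hxv, hxw]), hTcard]
    · rw [Finset.coe_insert]
      refine hTclique.insert (fun b hb hxb => ?_)
      simp only [Finset.coe_insert, Set.mem_insert_iff, Finset.coe_singleton,
        Set.mem_singleton_iff] at hb
      rcases hb with rfl | rfl | rfl
      · exact axu
      · exact axv
      · exact axw
  have n1 : ¬(2 ≤ cdg G u v ∧ 2 ≤ cdg G v w) := by
    rintro ⟨ha, hb⟩
    obtain ⟨x, h1, h2, h3, h4, h5, h6⟩ := L3 hfree auv auw avw ha hb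
    exact hnoK x h1 h2 h3 h4 h5 h6
  have n2 : ¬(2 ≤ cdg G u v ∧ 2 ≤ cdg G u w) := by
    rintro ⟨ha, hb⟩
    obtain ⟨x, h1, h2, h3, h4, h5, h6⟩ :=
      L3 hfree auv.symm avw auw ((cdg_comm u v) ▸ ha) hb
    exact hnoK x h2 h1 h3 h5 h4 h6
  have n3 : ¬(2 ≤ cdg G u w ∧ 2 ≤ cdg G v w) := by
    rintro ⟨ha, hb⟩
    obtain ⟨x, h1, h2, h3, h4, h5, h6⟩ :=
      L3 hfree auw auv avw.symm ha ((cdg_comm v w) ▸ hb)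
    exact hnoK x h1 h3 h2 h4 h6 h5
  have g1 : 1 ≤ cdg G u v := one_le_cdg auw avw
  have g2 : 1 ≤ cdg G u w := one_le_cdg auv avw.symm
  have g3 : 1 ≤ cdg G v w := one_le_cdg auv.symm auw.symm
  -- membership helper
  have mk : ∀ {a b : V}, G.Adj a b → cdg G a b = 1 → a ∈ ({u,v,w} : Finset V) →
      b ∈ ({u,v,w} : Finset V) → ({a, b} : Finset V) ∈ (E1s G).filter (· ⊆ ({u,v,w} : Finset V)) := by
    intro a b hab h1 haT hbT
    rw [Finset.mem_filter, E1s, Finset.mem_filter]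
    refine ⟨⟨pair_mem_cIn hab Finset.univ (Finset.mem_univ a) (Finset.mem_univ b),
      a, b, hab.ne, rfl, h1⟩, ?_⟩
    intro z hz
    rw [Finset.mem_insert, Finset.mem_singleton] at hz
    rcases hz with rfl | rfl <;> assumption
  have pairne : ∀ {a b c : V}, b ≠ c → b ≠ a → c ≠ a → ({a, b} : Finset V) ≠ ({a, c} : Finset V) := by
    intro a b c hbc hba hca h
    have : b ∈ ({a, c} : Finset V) := by rw [← h]; simp
    rw [Finset.mem_insert, Finset.mem_singleton] at this
    rcases this with rfl | rfl
    · exact hba rfl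
    · exact hbc rfl
  apply Finset.one_lt_card_iff.mpr
  by_cases c1 : 2 ≤ cdg G u v
  · -- then uw and vw have codeg 1
    have e2 : cdg G u w = 1 := le_antisymm (by by_contra h; exact n2 ⟨c1, by omega⟩) g2
    have e3 : cdg G v w = 1 := le_antisymm (by by_contra h; exact n1 ⟨c1, by omega⟩) g3
    refine ⟨{w, u}, {w, v}, ?_, ?_, pairne huv huw hvw⟩
    · have := mk (a := w) (b := u) auw.symm (cdg_comm u w ▸ e2) hw hu; exact this
    · have := mk (a := w) (b := v) avw.symm (cdg_comm v w ▸ e3) hw hv; exact this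
  · have e1 : cdg G u v = 1 := le_antisymm (by omega) g1
    by_cases c2 : 2 ≤ cdg G u w
    · have e3 : cdg G v w = 1 := le_antisymm (by by_contra h; exact n3 ⟨c2, by omega⟩) g3
      refine ⟨{v, u}, {v, w}, ?_, ?_, pairne huw huv hvw.symm⟩
      · exact mk (a := v) (b := u) auv.symm (cdg_comm u v ▸ e1) hv hu
      · exact mk (a := v) (b := w) avw e3 hv hw
    · have e2 : cdg G u w = 1 := le_antisymm (by omega) g2
      refine ⟨{u, v}, {u, w}, ?_, ?_, pairne hvw huv.symm huw.symm⟩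
      · exact mk auv e1 hu hv
      · exact mk auw e2 hu hw

lemma TA_card_le (hfree : ¬ containsCopy (susp (pathGraph 4)) G) :
    2 * (TAs G).card ≤ (E1s G).card := by
  have hdisj : ∀ T₁ ∈ TAs G, ∀ T₂ ∈ TAs G, T₁ ≠ T₂ →
      Disjoint ((E1s G).filter (· ⊆ T₁)) ((E1s G).filter (· ⊆ T₂)) := by
    intro T₁ h₁ T₂ h₂ hne
    rw [Finset.disjoint_left]
    intro p hp₁ hp₂
    rw [Finset.mem_filter] at hp₁ hp₂
    obtain ⟨hpE, hpT₁⟩ := hp₁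
    rw [E1s, Finset.mem_filter] at hpE
    obtain ⟨-, a, b, hab, rfl, h1⟩ := hpE
    rw [TAs, Finset.mem_filter] at h₁ h₂
    exact hne (E1_unique hab h1 h₁.1 h₂.1 hpT₁ hp₂.2)
  have hcard := Finset.card_biUnion hdisj
  have hsub : (TAs G).biUnion (fun T => (E1s G).filter (· ⊆ T)) ⊆ E1s G :=
    Finset.biUnion_subset.mpr (fun T _ => Finset.filter_subset _ _)
  calc 2 * (TAs G).card = ∑ _T ∈ TAs G, 2 := by rw [Finset.sum_const, smul_eq_mul, mul_comm]
    _ ≤ ∑ T ∈ TAs G, ((E1s G).filter (· ⊆ T)).card :=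
        Finset.sum_le_sum (fun T hT => TA_two hfree hT)
    _ = _ := hcard.symm
    _ ≤ (E1s G).card := Finset.card_le_card hsub

lemma E1_6k_le (hfree : ¬ containsCopy (susp (pathGraph 4)) G) :
    (E1s G).card + 6 * (cIn G 4 Finset.univ).card ≤ (cIn G 2 Finset.univ).card := by
  have hsub : (cIn G 4 Finset.univ).biUnion (fun K => K.powersetCard 2) ⊆
      (cIn G 2 Finset.univ) \ E1s G := by
    intro p hp
    obtain ⟨K, hK, hpK⟩ := Finset.mem_biUnion.mp hp
    obtain ⟨hpsub, hpcard⟩ := Finset.mem_powersetCard.mp hpK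
    have hpE : p ∈ cIn G 2 Finset.univ := mem_cIn.mpr ⟨Finset.subset_univ _, hpcard,
      ((mem_cIn.mp hK).2.2).subset (Finset.coe_subset.mpr hpsub)⟩
    rw [Finset.mem_sdiff]
    refine ⟨hpE, fun hpE1 => ?_⟩
    rw [E1s, Finset.mem_filter] at hpE1
    obtain ⟨-, a, b, hab, rfl, h1⟩ := hpE1
    have ha : a ∈ K := hpsub (by simp)
    have hb : b ∈ K := hpsub (by simp)
    have := (L4K hfree hK ha hb hab).1
    omega
  have hdisj : ∀ K₁ ∈ cIn G 4 Finset.univ, ∀ K₂ ∈ cIn G 4 Finset.univ, K₁ ≠ K₂ →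
      Disjoint (K₁.powersetCard 2) (K₂.powersetCard 2) := by
    intro K₁ h₁ K₂ h₂ hne
    rw [Finset.disjoint_left]
    intro p hp₁ hp₂
    obtain ⟨hs₁, hc⟩ := Finset.mem_powersetCard.mp hp₁
    obtain ⟨hs₂, -⟩ := Finset.mem_powersetCard.mp hp₂
    obtain ⟨a, b, hab, rfl⟩ := Finset.card_eq_two.mp hc
    exact L6 hfree h₁ h₂ hne hab (hs₁ (by simp)) (hs₁ (by simp)) (hs₂ (by simp)) (hs₂ (by simp))
  have hc1 : ((cIn G 4 Finset.univ).biUnion (fun K => K.powersetCard 2)).card =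
      6 * (cIn G 4 Finset.univ).card := by
    have hsum : ∀ K ∈ cIn G 4 Finset.univ, (K.powersetCard 2).card = 6 := by
      intro K hK
      rw [Finset.card_powersetCard, (mem_cIn.mp hK).2.1]
      decide
    rw [Finset.card_biUnion hdisj, Finset.sum_congr rfl hsum, Finset.sum_const, smul_eq_mul,
      mul_comm]
  have hE1sub : E1s G ⊆ cIn G 2 Finset.univ := by
    rw [E1s]; exact Finset.filter_subset _ _
  have h2 := Finset.card_le_card hsub
  rw [hc1, Finset.card_sdiff_of_subset hE1sub] at h2
  have h3 : (E1s G).card ≤ (cIn G 2 Finset.univ).card :=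
    Finset.card_le_card (Finset.filter_subset _ _)
  omega

/-- Main counting inequality: `2t ≤ e + 2k`. -/
lemma two_t_le (hfree : ¬ containsCopy (susp (pathGraph 4)) G) :
    2 * (cIn G 3 Finset.univ).card ≤
      (cIn G 2 Finset.univ).card + 2 * (cIn G 4 Finset.univ).card := by
  have hsplit : (TBs G).card + (TAs G).card = (cIn G 3 Finset.univ).card := by
    rw [TBs, TAs]
    exact Finset.card_filter_add_card_filter_not _
  have h1 := TB_card_le (G := G)
  have h2 := TA_card_le hfree
  have h3 := E1_6k_le hfree
  omega

end Counting

section EdgeBound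

/-- Degree within `s`. -/
noncomputable def degIn (G : SimpleGraph V) (s : Finset V) (u : V) : ℕ :=
  (s.filter (G.Adj u ·)).card

/-- Number of `K₄`s inside `s` through `u`. -/
noncomputable def mIn (G : SimpleGraph V) (s : Finset V) (u : V) : ℕ :=
  ((cIn G 4 s).filter (fun p => u ∈ p)).card

lemma cIn_filter_not_mem {r : ℕ} {s : Finset V} (u : V) :
    (cIn G r s).filter (fun p => u ∉ p) = cIn G r (s.erase u) := by
  ext p
  simp only [Finset.mem_filter, mem_cIn]
  constructor
  · rintro ⟨⟨hps, hc, hcl⟩, hup⟩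
    exact ⟨Finset.subset_erase.mpr ⟨hps, hup⟩, hc, hcl⟩
  · rintro ⟨hps, hc, hcl⟩
    have h := Finset.subset_erase.mp hps
    exact ⟨⟨h.1, hc, hcl⟩, h.2⟩

lemma eIn_split {s : Finset V} {u : V} (hu : u ∈ s) :
    (cIn G 2 s).card = (cIn G 2 (s.erase u)).card + degIn G s u := by
  have hsplit : ((cIn G 2 s).filter (fun p => u ∈ p)).card + (cIn G 2 (s.erase u)).card =
      (cIn G 2 s).card := by
    rw [← cIn_filter_not_mem u]
    exact Finset.card_filter_add_card_filter_not _
  have himg : (cIn G 2 s).filter (fun p => u ∈ p) =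
      (s.filter (G.Adj u ·)).image (fun v => {u, v}) := by
    ext p
    simp only [Finset.mem_filter, Finset.mem_image, mem_cIn]
    constructor
    · rintro ⟨⟨hps, hc, hcl⟩, hup⟩
      obtain ⟨a, b, hab, rfl⟩ := Finset.card_eq_two.mp hc
      have ha : a ∈ ({a, b} : Finset V) := by simp
      have hb : b ∈ ({a, b} : Finset V) := by simp
      rw [Finset.mem_insert, Finset.mem_singleton] at hup
      rcases hup with rfl | rfl
      · exact ⟨b, ⟨hps hb, clique_adj hcl ha hb hab⟩, rfl⟩
      · exact ⟨a, ⟨hps ha, clique_adj hcl hb ha hab.symm⟩, (Finset.pair_comm a u).symm⟩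
    · rintro ⟨v, hv, rfl⟩
      have hmem : ({u, v} : Finset V) ∈ cIn G 2 s := pair_mem_cIn hv.2 s hu hv.1
      rw [mem_cIn] at hmem
      exact ⟨hmem, by simp⟩
  have hinj : Set.InjOn (fun v => ({u, v} : Finset V)) ↑(s.filter (G.Adj u ·)) := by
    intro a ha b hb hab
    simp only [Finset.coe_filter, Set.mem_setOf_eq] at ha hb
    have hab' : ({u, a} : Finset V) = {u, b} := hab
    have : a ∈ ({u, b} : Finset V) := by rw [← hab']; simp
    rw [Finset.mem_insert, Finset.mem_singleton] at this
    rcases this with rfl | rfl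
    · exact absurd rfl ha.2.ne'
    · rfl
  rw [← hsplit, himg, Finset.card_image_of_injOn hinj, degIn]
  omega

lemma kIn_split {s : Finset V} (u : V) :
    (cIn G 4 s).card = (cIn G 4 (s.erase u)).card + mIn G s u := by
  have hsplit : ((cIn G 4 s).filter (fun p => u ∈ p)).card + (cIn G 4 (s.erase u)).card =
      (cIn G 4 s).card := by
    rw [← cIn_filter_not_mem u]
    exact Finset.card_filter_add_card_filter_not _
  rw [mIn]
  omega

lemma mIn_le (hfree : ¬ containsCopy (susp (pathGraph 4)) G) (s : Finset V) (u : V) :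
    3 * mIn G s u ≤ degIn G s u := by
  set F := (cIn G 4 s).filter (fun p => u ∈ p) with hF
  have hdisj : ∀ K₁ ∈ F, ∀ K₂ ∈ F, K₁ ≠ K₂ → Disjoint (K₁.erase u) (K₂.erase u) := by
    intro K₁ h₁ K₂ h₂ hne
    rw [hF, Finset.mem_filter] at h₁ h₂
    rw [Finset.disjoint_left]
    intro z hz₁ hz₂
    rw [Finset.mem_erase] at hz₁ hz₂
    exact L6 hfree h₁.1 h₂.1 hne (Ne.symm hz₁.1) h₁.2 hz₁.2 h₂.2 hz₂.2
  have hsub : F.biUnion (fun K => K.erase u) ⊆ s.filter (G.Adj u ·) := by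
    intro z hz
    obtain ⟨K, hK, hzK⟩ := Finset.mem_biUnion.mp hz
    rw [hF, Finset.mem_filter] at hK
    rw [Finset.mem_erase] at hzK
    obtain ⟨hKs, hKc, hKcl⟩ := mem_cIn.mp hK.1
    exact Finset.mem_filter.mpr ⟨hKs hzK.2, clique_adj hKcl hK.2 hzK.2 (Ne.symm hzK.1)⟩
  have hcard : ∀ K ∈ F, (K.erase u).card = 3 := by
    intro K hK
    rw [hF, Finset.mem_filter] at hK
    rw [Finset.card_erase_of_mem hK.2, (mem_cIn.mp hK.1).2.1]
  calc 3 * mIn G s u = ∑ _K ∈ F, 3 := by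
        rw [Finset.sum_const, smul_eq_mul, mul_comm]; rfl
    _ = ∑ K ∈ F, (K.erase u).card := (Finset.sum_congr rfl hcard).symm
    _ = (F.biUnion (fun K => K.erase u)).card := (Finset.card_biUnion hdisj).symm
    _ ≤ degIn G s u := Finset.card_le_card hsub

lemma K4_mindeg (hfree : ¬ containsCopy (susp (pathGraph 4)) G) {s K : Finset V}
    (hK : K ∈ cIn G 4 s) : ∃ x ∈ K, 4 * degIn G s x ≤ s.card + 8 := by
  obtain ⟨hKs, hKcard, hKcl⟩ := mem_cIn.mp hK
  have hpart : ∀ x ∈ K, degIn G s x = 3 + ((s.filter (G.Adj x ·)).filter (fun z => z ∉ K)).card := by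
    intro x hx
    have hsplit : ((s.filter (G.Adj x ·)).filter (fun z => z ∈ K)).card +
        ((s.filter (G.Adj x ·)).filter (fun z => z ∉ K)).card = degIn G s x :=
      Finset.card_filter_add_card_filter_not _
    have hek : (s.filter (G.Adj x ·)).filter (fun z => z ∈ K) = K.erase x := by
      ext z
      simp only [Finset.mem_filter, Finset.mem_erase]
      constructor
      · rintro ⟨⟨hzs, hadj⟩, hzK⟩
        exact ⟨hadj.ne', hzK⟩
      · rintro ⟨hzx, hzK⟩
        exact ⟨⟨hKs hzK, clique_adj hKcl hx hzK (Ne.symm hzx)⟩, hzK⟩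
    rw [hek, Finset.card_erase_of_mem hx, hKcard] at hsplit
    omega
  have hdisj : ∀ x ∈ K, ∀ y ∈ K, x ≠ y →
      Disjoint ((s.filter (G.Adj x ·)).filter (fun z => z ∉ K))
        ((s.filter (G.Adj y ·)).filter (fun z => z ∉ K)) := by
    intro x hx y hy hxy
    rw [Finset.disjoint_left]
    intro z hz₁ hz₂
    rw [Finset.mem_filter, Finset.mem_filter] at hz₁ hz₂
    obtain ⟨hc2, hsubS⟩ := L4K hfree hK hx hy hxy
    have hzS : z ∈ cdgS G x y := mem_cdgS.mpr ⟨hz₁.1.2, hz₂.1.2⟩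
    have hcardsd : (K \ {x, y}).card = 2 := by
      have hxysub : ({x, y} : Finset V) ⊆ K := by
        intro t ht
        rw [Finset.mem_insert, Finset.mem_singleton] at ht
        rcases ht with rfl | rfl <;> assumption
      rw [Finset.card_sdiff_of_subset hxysub, hKcard, Finset.card_pair hxy]
    have heq : K \ {x, y} = cdgS G x y := by
      apply Finset.eq_of_subset_of_card_le hsubS
      rw [hcardsd]
      exact le_of_eq hc2
    rw [← heq, Finset.mem_sdiff] at hzS
    exact hz₁.2 hzS.1
  have hsub2 : K.biUnion (fun x => (s.filter (G.Adj x ·)).filter (fun z => z ∉ K)) ⊆ s \ K := by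
    intro z hz
    obtain ⟨x, hx, hzx⟩ := Finset.mem_biUnion.mp hz
    rw [Finset.mem_filter, Finset.mem_filter] at hzx
    exact Finset.mem_sdiff.mpr ⟨hzx.1.1, hzx.2⟩
  have hsum : ∑ x ∈ K, ((s.filter (G.Adj x ·)).filter (fun z => z ∉ K)).card ≤ s.card - 4 := by
    rw [← Finset.card_biUnion hdisj]
    calc _ ≤ (s \ K).card := Finset.card_le_card hsub2
      _ = s.card - 4 := by rw [Finset.card_sdiff_of_subset hKs, hKcard]
  have h4 : 4 ≤ s.card := hKcard ▸ Finset.card_le_card hKs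
  have htot : ∑ x ∈ K, degIn G s x ≤ s.card + 8 := by
    rw [Finset.sum_congr rfl hpart, Finset.sum_add_distrib, Finset.sum_const, hKcard]
    simp only [smul_eq_mul]
    omega
  by_contra hcon
  push_neg at hcon
  have : ∀ x ∈ K, s.card + 9 ≤ 4 * degIn G s x := fun x hx => by have := hcon x hx; omega
  have hge : ∑ x ∈ K, (s.card + 9) ≤ ∑ x ∈ K, 4 * degIn G s x := Finset.sum_le_sum this
  rw [Finset.sum_const, hKcard, ← Finset.mul_sum] at hge
  simp only [smul_eq_mul] at hge
  omega

lemma deletion (hfree : ¬ containsCopy (susp (pathGraph 4)) G) {s : Finset V}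
    (hs : s.Nonempty) : ∃ u ∈ s, 2 * (degIn G s u + 2 * mIn G s u) ≤ s.card + 8 := by
  by_cases hK : (cIn G 4 s).Nonempty
  · obtain ⟨K, hKmem⟩ := hK
    obtain ⟨x, hxK, hx4⟩ := K4_mindeg hfree hKmem
    have hm := mIn_le hfree s x
    have hxs : x ∈ s := (mem_cIn.mp hKmem).1 hxK
    exact ⟨x, hxs, by omega⟩
  · have hm0 : ∀ u, mIn G s u = 0 := by
      intro u
      rw [mIn, Finset.not_nonempty_iff_eq_empty.mp hK]
      simp
    by_contra hcon
    push_neg at hcon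
    have hA : ∀ u ∈ s, s.card + 9 ≤ 2 * degIn G s u := by
      intro u hu
      have h := hcon u hu
      rw [hm0 u] at h
      omega
    have hfinal : ∀ a ∈ s, ∀ b ∈ s,
        ((s.filter (G.Adj a ·)) ∩ (s.filter (G.Adj b ·))).card ≤ 2 → False := by
      intro a ha b hb hle
      have h1 := hA a ha
      have h2 := hA b hb
      have hcup : ((s.filter (G.Adj a ·)) ∪ (s.filter (G.Adj b ·))).card ≤ s.card :=
        Finset.card_le_card (Finset.union_subset (Finset.filter_subset _ _)
          (Finset.filter_subset _ _))
      have hie := Finset.card_union_add_card_inter (s.filter (G.Adj a ·)) (s.filter (G.Adj b ·))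
      rw [degIn] at h1 h2
      omega
    have hrel : ∀ a b : V, ((s.filter (G.Adj a ·)) ∩ (s.filter (G.Adj b ·))).card ≤ cdg G a b := by
      intro a b
      apply Finset.card_le_card
      intro z hz
      rw [Finset.mem_inter, Finset.mem_filter, Finset.mem_filter] at hz
      exact mem_cdgS.mpr ⟨hz.1.2, hz.2.2⟩
    obtain ⟨u₀, hu₀⟩ := hs
    have hd₀ : 1 ≤ degIn G s u₀ := by have := hA u₀ hu₀; omega
    obtain ⟨v, hv⟩ := Finset.card_pos.mp hd₀
    rw [Finset.mem_filter] at hv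
    obtain ⟨hvs, hadj⟩ := hv
    have hinter : 1 ≤ ((s.filter (G.Adj u₀ ·)) ∩ (s.filter (G.Adj v ·))).card := by
      have h1 := hA u₀ hu₀
      have h2 := hA v hvs
      have hcup : ((s.filter (G.Adj u₀ ·)) ∪ (s.filter (G.Adj v ·))).card ≤ s.card :=
        Finset.card_le_card (Finset.union_subset (Finset.filter_subset _ _)
          (Finset.filter_subset _ _))
      have hie := Finset.card_union_add_card_inter (s.filter (G.Adj u₀ ·)) (s.filter (G.Adj v ·))
      rw [degIn] at h1 h2
      omega
    obtain ⟨w, hw⟩ := Finset.card_pos.mp hinter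
    rw [Finset.mem_inter, Finset.mem_filter, Finset.mem_filter] at hw
    obtain ⟨⟨hws, haw⟩, ⟨-, hbw⟩⟩ := hw
    by_cases h3 : 3 ≤ cdg G v w
    · have h1 : cdg G u₀ v = 1 := L2 hfree hadj haw hbw h3
      exact hfinal u₀ hu₀ v hvs (le_trans (hrel u₀ v) (by omega))
    · exact hfinal v hvs w hws (le_trans (hrel v w) (by omega))

lemma edge_bound (hfree : ¬ containsCopy (susp (pathGraph 4)) G) (s : Finset V) :
    4 * (cIn G 2 s).card + 8 * (cIn G 4 s).card ≤ s.card * s.card + 17 * s.card := by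
  induction s using Finset.strongInduction with
  | _ s ih =>
    rcases s.eq_empty_or_nonempty with rfl | hs
    · have h2 : cIn G 2 (∅ : Finset V) = ∅ := by
        rw [cIn, Finset.powersetCard_eq_empty.mpr (by simp)]
        rfl
      have h4 : cIn G 4 (∅ : Finset V) = ∅ := by
        rw [cIn, Finset.powersetCard_eq_empty.mpr (by simp)]
        rfl
      simp [h2, h4]
    · obtain ⟨u, hu, hdel⟩ := deletion hfree hs
      have h2 := eIn_split (G := G) hu
      have h4 := kIn_split (G := G) (s := s) u
      have hih := ih (s.erase u) (Finset.erase_ssubset hu)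
      have hc : (s.erase u).card + 1 = s.card := by
        rw [Finset.card_erase_of_mem hu]
        have : 1 ≤ s.card := Finset.card_pos.mpr hs
        omega
      set c' := (s.erase u).card with hc'
      set d := degIn G s u
      set m := mIn G s u
      -- arithmetic
      have hcost : 4 * d + 8 * m ≤ 2 * c' + 18 := by omega
      have hexp : (c' + 1) * (c' + 1) + 17 * (c' + 1) = c' * c' + 17 * c' + (2 * c' + 18) := by
        ring
      calc 4 * (cIn G 2 s).card + 8 * (cIn G 4 s).card
          = (4 * (cIn G 2 (s.erase u)).card + 8 * (cIn G 4 (s.erase u)).card)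
            + (4 * d + 8 * m) := by rw [h2, h4]; ring
        _ ≤ (c' * c' + 17 * c') + (2 * c' + 18) := Nat.add_le_add hih hcost
        _ = (c' + 1) * (c' + 1) + 17 * (c' + 1) := hexp.symm
        _ = s.card * s.card + 17 * s.card := by rw [hc]

end EdgeBound

lemma triCount_eq : triCount G = (cIn G 3 Finset.univ).card := by
  have hset : {T : Finset V | G.IsNClique 3 T} = ↑(cIn G 3 Finset.univ) := by
    ext T
    rw [Set.mem_setOf_eq, Finset.mem_coe, mem_cIn, isNClique_iff]
    constructor
    · rintro ⟨hcl, hc⟩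
      exact ⟨Finset.subset_univ _, hc, hcl⟩
    · rintro ⟨-, hc, hcl⟩
      exact ⟨hcl, hc⟩
  rw [triCount, hset, Set.ncard_coe_finset]

lemma main_bound (hfree : ¬ containsCopy (susp (pathGraph 4)) G) :
    8 * triCount G ≤ Fintype.card V * Fintype.card V + 17 * Fintype.card V := by
  have h2t := two_t_le hfree
  have hedge := edge_bound hfree (Finset.univ : Finset V)
  rw [Finset.card_univ] at hedge
  rw [triCount_eq]
  omega

end SuspP3Aux

/-- If `G` is `\widehat{P}_3`-free on `n ≥ 3` vertices, then `t(G) < n²/8 + 3n`. -/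
theorem suspension_P3_upper {V : Type*} [Fintype V] (G : SimpleGraph V)
    (hn : 3 ≤ Fintype.card V)
    (hfree : ¬ containsCopy (susp (pathGraph 4)) G) :
    (triCount G : ℝ) < (Fintype.card V : ℝ) ^ 2 / 8 + 3 * (Fintype.card V : ℝ) := by
  have h8 := SuspP3Aux.main_bound hfree
  have hlt : 8 * triCount G < Fintype.card V * Fintype.card V + 24 * Fintype.card V := by
    omega
  have hR : (8 : ℝ) * (triCount G : ℝ) <
      (Fintype.card V : ℝ) * (Fintype.card V : ℝ) + 24 * (Fintype.card V : ℝ) := by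
    exact_mod_cast hlt
  rw [pow_two]
  linarith
end

section
/- Let G be a K_4-free, K_{1,2,2}-free graph with no copy of \widehat{P}_4 (the suspension of the path with 4 edges). Suppose triangles xuv and yuv of G share the edge uv with x \ne y. Then exactly one of the pairs {xu, yv} and {xv, yu} consists of edges each lying in a unique triangle of G, and the edges of the other pair each lie in at least two triangles. -/
open SimpleGraph

def K122fun {V : Type*} (u x y v w : V) :
    (Σ i : Fin (Nat.succ 0).succ.succ, ![Fin 1, Fin 2, Fin 2] i) → V
  | ⟨0, _⟩ => u
  | ⟨1, ⟨0, _⟩⟩ => x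
  | ⟨1, ⟨1, _⟩⟩ => y
  | ⟨2, ⟨0, _⟩⟩ => v
  | ⟨2, ⟨1, _⟩⟩ => w

lemma codeg_pos {V : Type*} [Fintype V] (G : SimpleGraph V) {a b c : V}
    (h1 : G.Adj a c) (h2 : G.Adj b c) : 1 ≤ codeg G a b := by
  have hm : c ∈ G.neighborSet a ∩ G.neighborSet b := ⟨h1, h2⟩
  exact (Set.ncard_pos (Set.toFinite _)).2 ⟨c, hm⟩

lemma no_adj_xy {V : Type*} [Fintype V] (G : SimpleGraph V)
    (hK4 : ¬ containsCopy (⊤ : SimpleGraph (Fin 4)) G)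
    {u v x y : V} (huv : G.Adj u v) (hxu : G.Adj x u) (hxv : G.Adj x v)
    (hyu : G.Adj y u) (hyv : G.Adj y v) : ¬ G.Adj x y := by
  intro hxy
  apply hK4
  refine ⟨⟨![x, y, u, v], ?_⟩, ?_⟩
  · intro a b hab
    have h : a ≠ b := hab.ne
    fin_cases a <;> fin_cases b <;>
      simp_all [huv, hxu, hxv, hyu, hyv, hxy, huv.symm, hxu.symm, hxv.symm,
        hyu.symm, hyv.symm, hxy.symm]
  · show Function.Injective ![x, y, u, v]
    intro a b hab
    have h1 := hxy.ne
    have h2 := hxu.ne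
    have h3 := hxv.ne
    have h4 := hyu.ne
    have h5 := hyv.ne
    have h6 := huv.ne
    fin_cases a <;> fin_cases b <;> simp_all
  
/-- Key lemma: xu and yu cannot both be heavy. -/
lemma not_both_heavy {V : Type*} [Fintype V] (G : SimpleGraph V)
    (hK122 : ¬ containsCopy (completeMultipartiteGraph ![Fin 1, Fin 2, Fin 2]) G)
    (hP4 : ¬ containsCopy (susp (pathGraph 5)) G)
    {u v x y : V} (hxy : x ≠ y) (hxyadj : ¬ G.Adj x y)
    (huv : G.Adj u v) (hxu : G.Adj x u) (hxv : G.Adj x v)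
    (hyu : G.Adj y u) (hyv : G.Adj y v)
    (hx2 : 2 ≤ codeg G x u) (hy2 : 2 ≤ codeg G y u) : False := by
  have hx2' : 1 < (G.neighborSet x ∩ G.neighborSet u).ncard := hx2
  have hy2' : 1 < (G.neighborSet y ∩ G.neighborSet u).ncard := hy2
  obtain ⟨w1, hw1, hw1v⟩ := Set.exists_ne_of_one_lt_ncard hx2' v
  obtain ⟨w2, hw2, hw2v⟩ := Set.exists_ne_of_one_lt_ncard hy2' v
  obtain ⟨hw1x, hw1u⟩ : G.Adj x w1 ∧ G.Adj u w1 := hw1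
  obtain ⟨hw2y, hw2u⟩ : G.Adj y w2 ∧ G.Adj u w2 := hw2
  have hw1y : w1 ≠ y := fun h => hxyadj (h ▸ hw1x)
  have hw2x : w2 ≠ x := fun h => hxyadj (G.adj_symm (h ▸ hw2y))
  have h1 := hxu.ne
  have h2 := hxv.ne
  have h3 := hyu.ne
  have h4 := hyv.ne
  have h5 := huv.ne
  have h6 := hw1x.ne
  have h7 := hw1u.ne
  have h8 := hw2y.ne
  have h9 := hw2u.ne
  by_cases hw : w1 = w2
  · -- K_{1,2,2} : apex u, parts {x,y}, {v,w1}
    subst hw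
    apply hK122
    refine ⟨⟨K122fun u x y v w1, ?_⟩, ?_⟩
    · rintro ⟨⟨i, hi⟩, a⟩ ⟨⟨j, hj⟩, b⟩ hab
      have hij : (⟨i, hi⟩ : Fin 3) ≠ ⟨j, hj⟩ := hab
      interval_cases i <;> interval_cases j <;>
        first
        | exact absurd rfl hij
        | (rcases a with ⟨ia, ha⟩ <;> rcases b with ⟨ib, hb⟩ <;>
            interval_cases ia <;> interval_cases ib <;>
            simp_all [K122fun] <;>
            solve_by_elim [SimpleGraph.Adj.symm])
    · show Function.Injective (K122fun u x y v w1)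
      rintro ⟨⟨i, hi⟩, a⟩ ⟨⟨j, hj⟩, b⟩ hab
      interval_cases i <;> interval_cases j <;>
        rcases a with ⟨ia, ha⟩ <;> rcases b with ⟨ib, hb⟩ <;>
        interval_cases ia <;> interval_cases ib <;>
        simp_all [K122fun]
  · -- susp P5 : apex u, path w1 - x - v - y - w2
    apply hP4
    refine ⟨⟨fun p => match p with
      | none => u
      | some i => ![w1, x, v, y, w2] i, ?_⟩, ?_⟩
    · rintro (_ | a) (_ | b) hab
      · exact absurd hab (by simp [susp])
      · fin_cases b <;> simp_all [susp] <;> solve_by_elim [SimpleGraph.Adj.symm]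
      · fin_cases a <;> simp_all [susp] <;> solve_by_elim [SimpleGraph.Adj.symm]
      · have hab' : (pathGraph 5).Adj a b := hab
        rw [pathGraph_adj] at hab'
        fin_cases a <;> fin_cases b <;> simp_all [susp] <;>
          solve_by_elim [SimpleGraph.Adj.symm]
    · show Function.Injective (fun p : Option (Fin 5) => match p with
        | none => u
        | some i => ![w1, x, v, y, w2] i)
      rintro (_ | a) (_ | b) hab
      · rfl
      · exact absurd hab (by fin_cases b <;> simp_all)
      · exact absurd hab (by fin_cases a <;> simp_all)
      · fin_cases a <;> fin_cases b <;> simp_all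

/-- In a `K_4`-free, `K_{1,2,2}`-free, `\widehat{P}_4`-free graph with no triangle
having two light edges: if triangles `xuv` and `yuv` share the edge `uv` (`x ≠ y`),
then exactly one of the pairs `{xu, yv}`, `{xv, yu}` consists of light edges, and
the other pair consists of heavy edges. -/
theorem light_heavy_lemma {V : Type*} [Fintype V] (G : SimpleGraph V)
    (hK4 : ¬ containsCopy (⊤ : SimpleGraph (Fin 4)) G)
    (hK122 : ¬ containsCopy (completeMultipartiteGraph ![Fin 1, Fin 2, Fin 2]) G)
    (hP4 : ¬ containsCopy (susp (pathGraph 5)) G)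
    (hNoTwoLight : ∀ a b c : V, G.Adj a b → G.Adj b c → G.Adj a c →
      ¬ (codeg G a b = 1 ∧ codeg G b c = 1) ∧
      ¬ (codeg G a b = 1 ∧ codeg G a c = 1) ∧
      ¬ (codeg G b c = 1 ∧ codeg G a c = 1))
    (u v x y : V) (hxy : x ≠ y) (huv : G.Adj u v)
    (hxu : G.Adj x u) (hxv : G.Adj x v) (hyu : G.Adj y u) (hyv : G.Adj y v) :
    (codeg G x u = 1 ∧ codeg G y v = 1 ∧ 2 ≤ codeg G x v ∧ 2 ≤ codeg G y u) ∨
    (codeg G x v = 1 ∧ codeg G y u = 1 ∧ 2 ≤ codeg G x u ∧ 2 ≤ codeg G y v) := by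
  have hxyadj : ¬ G.Adj x y := no_adj_xy G hK4 huv hxu hxv hyu hyv
  have p1 : 1 ≤ codeg G x u := codeg_pos G hxv huv
  have p2 : 1 ≤ codeg G x v := codeg_pos G hxu huv.symm
  have p3 : 1 ≤ codeg G y u := codeg_pos G hyv huv
  have p4 : 1 ≤ codeg G y v := codeg_pos G hyu huv.symm
  have A := (hNoTwoLight x u v hxu huv hxv).2.1
  have B := (hNoTwoLight y u v hyu huv hyv).2.1
  have C : ¬ (2 ≤ codeg G x u ∧ 2 ≤ codeg G y u) := fun ⟨h, h'⟩ =>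
    not_both_heavy G hK122 hP4 hxy hxyadj huv hxu hxv hyu hyv h h'
  have D : ¬ (2 ≤ codeg G x v ∧ 2 ≤ codeg G y v) := fun ⟨h, h'⟩ =>
    not_both_heavy G hK122 hP4 hxy hxyadj huv.symm hxv hxu hyv hyu h h'
  omega
end

section
/- For every \epsilon > 0 there exists n_0 such that for all n \ge n_0: every n-vertex graph with no copy of \widehat{P}_4 has at most n^2/8 + \epsilon n^2 triangles. -/
open SimpleGraph

open Finset

namespace Aux

variable {n : ℕ} {G : SimpleGraph (Fin n)}

/-- From a suspended-path configuration, build a copy of `susp (pathGraph 5)`. -/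
lemma copy_of_config {x a b c d e : Fin n}
    (hxa : G.Adj x a) (hxb : G.Adj x b) (hxc : G.Adj x c) (hxd : G.Adj x d)
    (hxe : G.Adj x e)
    (hab : G.Adj a b) (hbc : G.Adj b c) (hcd : G.Adj c d) (hde : G.Adj d e)
    (hac : a ≠ c) (had : a ≠ d) (hae : a ≠ e) (hbd : b ≠ d) (hbe : b ≠ e)
    (hce : c ≠ e) :
    containsCopy (susp (pathGraph 5)) G := by
  classical
  let v : Fin 5 → Fin n := ![a, b, c, d, e]
  let f : Option (Fin 5) → Fin n := fun o => o.elim x v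
  have hadj : ∀ {p q : Option (Fin 5)}, (susp (pathGraph 5)).Adj p q →
      G.Adj (f p) (f q) := by
    rintro (_ | i) (_ | j) h
    · exact h.elim
    · -- none, some j
      have : G.Adj x (v j) := by fin_cases j <;> assumption
      exact this
    · have : G.Adj x (v i) := by fin_cases i <;> assumption
      exact this.symm
    · -- some i, some j
      have hij : (pathGraph 5).Adj i j := h
      rw [pathGraph_adj] at hij
      fin_cases i <;> fin_cases j <;> simp_all [v] <;> first
        | exact hab | exact hab.symm | exact hbc | exact hbc.symm
        | exact hcd | exact hcd.symm | exact hde | exact hde.symm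
  refine ⟨⟨f, hadj⟩, ?_⟩
  have hne : ∀ i : Fin 5, x ≠ v i := by
    intro i; fin_cases i <;> simp [v]
    exacts [hxa.ne, hxb.ne, hxc.ne, hxd.ne, hxe.ne]
  have hvinj : Function.Injective v := by
    intro i j hij
    fin_cases i <;> fin_cases j <;> simp_all [v] <;> first
      | rfl
      | exact absurd hij hab.ne | exact absurd hij.symm hab.ne
      | exact absurd hij hbc.ne | exact absurd hij.symm hbc.ne
      | exact absurd hij hcd.ne | exact absurd hij.symm hcd.ne
      | exact absurd hij hde.ne | exact absurd hij.symm hde.ne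
      | exact absurd hij hac | exact absurd hij.symm hac
      | exact absurd hij had | exact absurd hij.symm had
      | exact absurd hij hae | exact absurd hij.symm hae
      | exact absurd hij hbd | exact absurd hij.symm hbd
      | exact absurd hij hbe | exact absurd hij.symm hbe
      | exact absurd hij hce | exact absurd hij.symm hce
  rintro (_ | i) (_ | j) hfij
  · rfl
  · exact absurd hfij (hne j)
  · exact absurd hfij.symm (hne i)
  · simpa using congrArg some (hvinj hfij)

end Aux

namespace Aux2

variable {n : ℕ} (G : SimpleGraph (Fin n)) [DecidableRel G.Adj]

/-- neighbor finset -/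
abbrev NB (u : Fin n) : Finset (Fin n) := G.neighborFinset u

/-- codegree -/
abbrev cdF (u v : Fin n) : ℕ := (NB G u ∩ NB G v).card

lemma cdF_comm (u v : Fin n) : cdF G u v = cdF G v u := by
  rw [cdF, cdF, Finset.inter_comm]

variable {G}

/-- the no-suspended-path hypothesis -/
def NoSusp : Prop := ∀ x a b c d e : Fin n,
    G.Adj x a → G.Adj x b → G.Adj x c → G.Adj x d → G.Adj x e →
    G.Adj a b → G.Adj b c → G.Adj c d → G.Adj d e →
    a ≠ c → a ≠ d → a ≠ e → b ≠ d → b ≠ e → c ≠ e → False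

lemma nonempty_aux {s : Finset (Fin n)} {k : ℕ} (h : k ≤ s.card) (t : Finset (Fin n))
    (ht : t.card < k) : (s \ t).Nonempty := by
  rw [← Finset.card_pos]
  have := Finset.le_card_sdiff t s
  omega

/-- L1 : a vertex `w` of the link of `u` adjacent to two distinct vertices of
the link of respective link-degrees ≥ 3 and ≥ 4 yields a suspended path. -/
lemma L1 (hP : NoSusp (G := G)) {u w x1 x2 : Fin n}
    (huw : G.Adj u w) (hux1 : G.Adj u x1) (hux2 : G.Adj u x2)
    (hwx1 : G.Adj w x1) (hwx2 : G.Adj w x2) (h12 : x1 ≠ x2)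
    (h3 : 3 ≤ cdF G u x1) (h4 : 4 ≤ cdF G u x2) : False := by
  obtain ⟨a, ha⟩ := nonempty_aux h3 {w, x2} (by
    exact lt_of_le_of_lt (Finset.card_insert_le _ _) (by simp))
  rw [Finset.mem_sdiff, Finset.mem_inter, mem_neighborFinset, mem_neighborFinset,
    Finset.mem_insert, Finset.mem_singleton] at ha
  obtain ⟨⟨hua, hx1a⟩, haw⟩ := ha
  push_neg at haw
  obtain ⟨haw, hax2⟩ := haw
  obtain ⟨b, hb⟩ := nonempty_aux h4 {w, x1, a} (by
    calc ({w, x1, a} : Finset (Fin n)).card ≤ 3 := by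
          exact le_trans (Finset.card_insert_le _ _)
            (by have := Finset.card_insert_le x1 {a}; rw [Finset.card_singleton] at this; omega)
      _ < 4 := by omega)
  rw [Finset.mem_sdiff, Finset.mem_inter, mem_neighborFinset, mem_neighborFinset,
    Finset.mem_insert, Finset.mem_insert, Finset.mem_singleton] at hb
  obtain ⟨⟨hub, hx2b⟩, hbw⟩ := hb
  push_neg at hbw
  obtain ⟨hbw, hbx1, hba⟩ := hbw
  exact hP u a x1 w x2 b hua hux1 huw hux2 hub hx1a.symm hwx1.symm hwx2 hx2b
    haw hax2 (fun h => hba h.symm) h12 (Ne.symm hbx1) (Ne.symm hbw)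

lemma card3 {α : Type*} [DecidableEq α] (a b c : α) :
    ({a, b, c} : Finset α).card ≤ 3 := by
  have h1 := Finset.card_insert_le a ({b, c} : Finset α)
  have h2 := Finset.card_insert_le b ({c} : Finset α)
  simp only [Finset.card_singleton] at h1 h2
  omega

/-- helper: the "edge among the three centers-neighbors" case. -/
lemma EC (hP : NoSusp (G := G)) {u v w1 w2 w3 z : Fin n}
    (huv : G.Adj u v)
    (hu1 : G.Adj u w1) (hu2 : G.Adj u w2) (hu3 : G.Adj u w3)
    (hv1 : G.Adj v w1) (hv2 : G.Adj v w2) (hv3 : G.Adj v w3)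
    (d12 : w1 ≠ w2) (d13 : w1 ≠ w3) (d23 : w2 ≠ w3)
    (h12 : G.Adj w1 w2)
    (hzv : z ≠ v) (huz : G.Adj u z) (h3z : G.Adj w3 z)
    (hcd : 9 ≤ cdF G u v) : False := by
  obtain ⟨a, ha⟩ := nonempty_aux hcd ({w1, w2, w3} : Finset (Fin n))
    (lt_of_le_of_lt (card3 _ _ _) (by norm_num))
  rw [Finset.mem_sdiff, Finset.mem_inter, mem_neighborFinset, mem_neighborFinset] at ha
  obtain ⟨⟨hua, hva⟩, ham⟩ := ha
  simp only [Finset.mem_insert, Finset.mem_singleton] at ham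
  push_neg at ham
  obtain ⟨ha1, ha2, ha3⟩ := ham
  rcases eq_or_ne z w1 with hz1 | hzw1
  · -- path w2 - w1 - w3 - v - a
    have h31 : G.Adj w3 w1 := hz1 ▸ h3z
    exact hP u w2 w1 w3 v a hu2 hu1 hu3 huv hua h12.symm h31.symm hv3.symm hva
      d23 hv2.ne' (Ne.symm ha2) hv1.ne' (Ne.symm ha1) (Ne.symm ha3)
  rcases eq_or_ne z w2 with hz2 | hzw2
  · -- path w1 - w2 - w3 - v - a
    have h32 : G.Adj w3 w2 := hz2 ▸ h3z
    exact hP u w1 w2 w3 v a hu1 hu2 hu3 huv hua h12 h32.symm hv3.symm hva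
      d13 hv1.ne' (Ne.symm ha1) hv2.ne' (Ne.symm ha2) (Ne.symm ha3)
  · -- path z - w3 - v - w1 - w2
    exact hP u z w3 v w1 w2 huz hu3 huv hu1 hu2 h3z.symm hv3.symm hv1 h12
      hzv hzw1 hzw2 (Ne.symm d13) (Ne.symm d23) hv2.ne

variable (G) in
/-- vertices of the link of `u` that are adjacent to `v` and have a second
link-neighbor besides `v`. -/
def DS (u v : Fin n) : Finset (Fin n) :=
  (NB G u ∩ NB G v).filter (fun w => ∃ z, z ≠ v ∧ G.Adj u z ∧ G.Adj w z)

/-- Claim M : at most two neighbors of a high-degree link vertex have a second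
neighbor in the link. -/
lemma claimM (hP : NoSusp (G := G)) {u v : Fin n} (huv : G.Adj u v)
    (hcd : 9 ≤ cdF G u v) : (DS G u v).card ≤ 2 := by
  by_contra hcon
  push_neg at hcon
  have h3 : 3 ≤ (DS G u v).card := hcon
  obtain ⟨w1, hw1⟩ := Finset.card_pos.1 (show 0 < (DS G u v).card by omega)
  have h2 : 2 ≤ ((DS G u v).erase w1).card := by
    rw [Finset.card_erase_of_mem hw1]; omega
  obtain ⟨w2, hw2⟩ := Finset.card_pos.1 (by omega : 0 < ((DS G u v).erase w1).card)
  have h1 : 1 ≤ (((DS G u v).erase w1).erase w2).card := by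
    rw [Finset.card_erase_of_mem hw2]; omega
  obtain ⟨w3, hw3⟩ := Finset.card_pos.1 (by omega : 0 < (((DS G u v).erase w1).erase w2).card)
  have d23 : w2 ≠ w3 := (Finset.ne_of_mem_erase hw3).symm
  have hw3' := Finset.mem_of_mem_erase hw3
  have d13 : w1 ≠ w3 := (Finset.ne_of_mem_erase hw3').symm
  have hw3'' := Finset.mem_of_mem_erase hw3'
  have d12 : w1 ≠ w2 := (Finset.ne_of_mem_erase hw2).symm
  have hw2' := Finset.mem_of_mem_erase hw2
  -- unpack memberships
  have unpack : ∀ w ∈ DS G u v, G.Adj u w ∧ G.Adj v w ∧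
      ∃ z, z ≠ v ∧ G.Adj u z ∧ G.Adj w z := by
    intro w hw
    rw [DS, Finset.mem_filter, Finset.mem_inter, mem_neighborFinset, mem_neighborFinset] at hw
    exact ⟨hw.1.1, hw.1.2, hw.2⟩
  obtain ⟨hu1, hv1, z1, hz1v, huz1, h1z1⟩ := unpack w1 hw1
  obtain ⟨hu2, hv2, z2, hz2v, huz2, h2z2⟩ := unpack w2 hw2'
  obtain ⟨hu3, hv3, z3, hz3v, huz3, h3z3⟩ := unpack w3 hw3''
  by_cases h12 : G.Adj w1 w2
  · exact EC hP huv hu1 hu2 hu3 hv1 hv2 hv3 d12 d13 d23 h12 hz3v huz3 h3z3 hcd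
  by_cases h13 : G.Adj w1 w3
  · exact EC hP huv hu1 hu3 hu2 hv1 hv3 hv2 d13 d12 (Ne.symm d23) h13 hz2v huz2 h2z2 hcd
  by_cases h23 : G.Adj w2 w3
  · exact EC hP huv hu2 hu3 hu1 hv2 hv3 hv1 d23 (Ne.symm d12) (Ne.symm d13) h23
      hz1v huz1 h1z1 hcd
  -- no edges among w1 w2 w3
  have hz1w2 : z1 ≠ w2 := fun h => h12 (h ▸ h1z1)
  have hz1w3 : z1 ≠ w3 := fun h => h13 (h ▸ h1z1)
  have hz2w1 : z2 ≠ w1 := fun h => h12 (G.adj_symm (h ▸ h2z2))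
  have hz2w3 : z2 ≠ w3 := fun h => h23 (h ▸ h2z2)
  rcases eq_or_ne z1 z2 with rfl | hz12
  · -- common second neighbor z; path w1 - z - w2 - v - a
    obtain ⟨a, ha⟩ := nonempty_aux hcd ({w1, w2, z1} : Finset (Fin n))
      (lt_of_le_of_lt (card3 _ _ _) (by norm_num))
    rw [Finset.mem_sdiff, Finset.mem_inter, mem_neighborFinset, mem_neighborFinset] at ha
    obtain ⟨⟨hua, hva⟩, ham⟩ := ha
    simp only [Finset.mem_insert, Finset.mem_singleton] at ham
    push_neg at ham
    obtain ⟨ha1, ha2, haz⟩ := ham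
    exact hP u w1 z1 w2 v a hu1 huz1 hu2 huv hua h1z1 h2z2.symm hv2.symm hva
      d12 hv1.ne' (Ne.symm ha1) hz1v (Ne.symm haz) (Ne.symm ha2)
  · -- path z1 - w1 - v - w2 - z2
    exact hP u z1 w1 v w2 z2 huz1 hu1 huv hu2 huz2 h1z1.symm hv1.symm hv2 h2z2
      hz1v hz1w2 hz12 d12 (Ne.symm hz2w1) (Ne.symm hz2v)

variable (G) in
/-- heavy partners of `u` -/
def spouses (K : ℕ) (u : Fin n) : Finset (Fin n) :=
  (NB G u).filter (fun v => K ≤ cdF G u v)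

lemma spouses_mem {K : ℕ} {u v : Fin n} (h : v ∈ spouses G K u) :
    G.Adj u v ∧ K ≤ cdF G u v := by
  rw [spouses, Finset.mem_filter, mem_neighborFinset] at h; exact h

/-- distinct heavy partners have disjoint witness sets -/
lemma SD (hP : NoSusp (G := G)) {K : ℕ} (hK : 9 ≤ K) {u v v' x : Fin n}
    (hv : v ∈ spouses G K u) (hv' : v' ∈ spouses G K u) (hne : v ≠ v')
    (hux : G.Adj u x) (hxv : G.Adj x v) (hxv' : G.Adj x v') : False := by
  obtain ⟨huv, hcv⟩ := spouses_mem hv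
  obtain ⟨huv', hcv'⟩ := spouses_mem hv'
  exact L1 hP hux huv huv' hxv hxv' hne (by omega) (by omega)

lemma spouse_pairwise_disj (hP : NoSusp (G := G)) {K : ℕ} (hK : 9 ≤ K) (u : Fin n) :
    ∀ v ∈ spouses G K u, ∀ v' ∈ spouses G K u, v ≠ v' →
      Disjoint (NB G u ∩ NB G v) (NB G u ∩ NB G v') := by
  intro v hv v' hv' hne
  rw [Finset.disjoint_left]
  intro x hx hx'
  rw [Finset.mem_inter, mem_neighborFinset, mem_neighborFinset] at hx hx'
  exact SD hP hK hv hv' hne hx.1 hx.2.symm hx'.2.symm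

lemma SPsum (hP : NoSusp (G := G)) {K : ℕ} (hK : 9 ≤ K) (u : Fin n) :
    ∑ v ∈ spouses G K u, cdF G u v ≤ n := by
  classical
  have hdisj := spouse_pairwise_disj hP hK u
  have hcard : ∑ v ∈ spouses G K u, cdF G u v
      = ((spouses G K u).biUnion (fun v => NB G u ∩ NB G v)).card := by
    rw [Finset.card_biUnion hdisj]
  rw [hcard]
  calc ((spouses G K u).biUnion (fun v => NB G u ∩ NB G v)).card
      ≤ (Finset.univ : Finset (Fin n)).card := Finset.card_le_univ _
    _ = n := by simp

lemma spouse_card (hP : NoSusp (G := G)) {K : ℕ} (hK : 9 ≤ K) (u : Fin n) :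
    K * (spouses G K u).card ≤ n := by
  have h1 : K * (spouses G K u).card ≤ ∑ v ∈ spouses G K u, cdF G u v := by
    rw [mul_comm, ← Finset.sum_const_nat (m := K) (fun x hx => rfl)]
    exact Finset.sum_le_sum (fun v hv => (spouses_mem hv).2)
  exact le_trans h1 (SPsum hP hK u)

variable (G) in
/-- `w` witnesses the heavy edge `uv`, with both `uw`, `vw` light -/
def wit (K : ℕ) (u v w : Fin n) : Prop :=
  G.Adj u v ∧ K ≤ cdF G u v ∧ G.Adj u w ∧ G.Adj v w ∧ cdF G u w < K ∧ cdF G v w < K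

instance (K : ℕ) (u v w : Fin n) : Decidable (wit G K u v w) := by
  unfold wit; infer_instance

lemma wit_spouse {K : ℕ} {u v w : Fin n} (h : wit G K u v w) : v ∈ spouses G K u := by
  rw [spouses, Finset.mem_filter, mem_neighborFinset]; exact ⟨h.1, h.2.1⟩

/-- uniqueness of the heavy partner given a witness -/
lemma UQ (hP : NoSusp (G := G)) {K : ℕ} (hK : 9 ≤ K) {u v v' w : Fin n}
    (h : wit G K u v w) (h' : wit G K u v' w) : v = v' := by
  by_contra hne
  exact SD hP hK (wit_spouse h) (wit_spouse h') hne h.2.2.1 h.2.2.2.1.symm h'.2.2.2.1.symm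

/-- the third vertex of a triangle containing two given vertices -/
lemma third_elt {tr : Finset (Fin n)} (h : G.IsNClique 3 tr) {x y : Fin n}
    (hx : x ∈ tr) (hy : y ∈ tr) (hxy : x ≠ y) :
    ∃ z, z ∈ tr ∧ z ≠ x ∧ z ≠ y ∧ tr = {x, y, z} ∧ G.Adj x y ∧ G.Adj x z ∧ G.Adj y z := by
  classical
  have hcard := h.card_eq
  have hsub : ({x, y} : Finset (Fin n)) ⊆ tr := by
    intro a ha; simp only [Finset.mem_insert, Finset.mem_singleton] at ha
    rcases ha with rfl | rfl <;> assumption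
  have hxycard : ({x, y} : Finset (Fin n)).card = 2 := by
    rw [Finset.card_insert_of_notMem (by simpa using hxy), Finset.card_singleton]
  have hsd : (tr \ {x, y}).card = 1 := by
    rw [Finset.card_sdiff_of_subset hsub, hxycard, hcard]
  obtain ⟨z, hz⟩ := Finset.card_pos.1 (by omega : 0 < (tr \ {x, y}).card)
  rw [Finset.mem_sdiff] at hz
  obtain ⟨hztr, hzxy⟩ := hz
  simp only [Finset.mem_insert, Finset.mem_singleton] at hzxy
  push_neg at hzxy
  have hsub2 : ({x, y, z} : Finset (Fin n)) ⊆ tr := by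
    intro a ha; simp only [Finset.mem_insert, Finset.mem_singleton] at ha
    rcases ha with rfl | rfl | rfl <;> assumption
  have hm1 : x ∉ ({y, z} : Finset (Fin n)) := by
    simp only [Finset.mem_insert, Finset.mem_singleton]
    push_neg
    exact ⟨hxy, hzxy.1.symm⟩
  have hm2 : y ∉ ({z} : Finset (Fin n)) := by simpa using hzxy.2.symm
  have hc3 : ({x, y, z} : Finset (Fin n)).card = 3 := by
    rw [Finset.card_insert_of_notMem hm1, Finset.card_insert_of_notMem hm2,
      Finset.card_singleton]
  have hset : tr = {x, y, z} :=
    (Finset.eq_of_subset_of_card_le hsub2 (by omega)).symm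
  have hadj : ∀ a ∈ tr, ∀ b ∈ tr, a ≠ b → G.Adj a b := by
    intro a ha b hb hab
    exact h.1 (Finset.mem_coe.2 ha) (Finset.mem_coe.2 hb) hab
  exact ⟨z, hztr, hzxy.1, hzxy.2, hset, hadj x hx y hy hxy,
    hadj x hx z hztr (Ne.symm hzxy.1), hadj y hy z hztr (Ne.symm hzxy.2)⟩

/-! ### Counting helpers -/

lemma pairs_eq_biUnion (s : Fin n → Finset (Fin n)) :
    (Finset.univ.filter (fun q : Fin n × Fin n => q.2 ∈ s q.1))
      = Finset.univ.biUnion (fun u => {u} ×ˢ s u) := by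
  ext ⟨a, b⟩
  simp [eq_comm]

lemma pairs_disj (s : Fin n → Finset (Fin n)) :
    ∀ u ∈ (Finset.univ : Finset (Fin n)), ∀ v ∈ (Finset.univ : Finset (Fin n)), u ≠ v →
      Disjoint (({u} : Finset (Fin n)) ×ˢ s u) ({v} ×ˢ s v) := by
  intro u _ v _ huv
  rw [Finset.disjoint_left]
  rintro ⟨a, b⟩ ha hb
  rw [Finset.mem_product, Finset.mem_singleton] at ha hb
  exact huv (ha.1 ▸ hb.1 ▸ rfl)

lemma pairs_card (s : Fin n → Finset (Fin n)) :
    (Finset.univ.filter (fun q : Fin n × Fin n => q.2 ∈ s q.1)).card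
      = ∑ u, (s u).card := by
  rw [pairs_eq_biUnion, Finset.card_biUnion (pairs_disj s)]
  refine Finset.sum_congr rfl (fun u _ => ?_)
  rw [Finset.card_product, Finset.card_singleton, one_mul]

lemma pairs_sum (s : Fin n → Finset (Fin n)) (f : Fin n × Fin n → ℕ) :
    ∑ q ∈ Finset.univ.filter (fun q : Fin n × Fin n => q.2 ∈ s q.1), f q
      = ∑ u, ∑ v ∈ s u, f (u, v) := by
  rw [pairs_eq_biUnion, Finset.sum_biUnion (pairs_disj s)]
  refine Finset.sum_congr rfl (fun u _ => ?_)
  rw [Finset.sum_product, Finset.sum_singleton]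

/-- extract a sorted triple from a triangle -/
lemma sorted3 {tr : Finset (Fin n)} (h : G.IsNClique 3 tr) :
    ∃ a b c : Fin n, a < b ∧ b < c ∧ G.Adj a b ∧ G.Adj a c ∧ G.Adj b c ∧
      tr = {a, b, c} := by
  classical
  obtain ⟨x, y, z, hxy, hxz, hyz, rfl⟩ := is3Clique_iff.1 h
  have hsets : ∀ (a b c : Fin n), ({a, b, c} : Finset (Fin n)) = {x, y, z} →
      G.Adj a b → G.Adj a c → G.Adj b c →
      a < b → b < c →
      ∃ a' b' c' : Fin n, a' < b' ∧ b' < c' ∧ G.Adj a' b' ∧ G.Adj a' c' ∧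
        G.Adj b' c' ∧ ({x, y, z} : Finset (Fin n)) = {a', b', c'} := by
    intro a b c hset hab hac hbc h1 h2
    exact ⟨a, b, c, h1, h2, hab, hac, hbc, hset.symm⟩
  rcases lt_trichotomy x y with h1 | h1 | h1
  · rcases lt_trichotomy y z with h2 | h2 | h2
    · exact hsets x y z rfl hxy hxz hyz h1 h2
    · exact absurd h2 hyz.ne'.symm.elim
    · rcases lt_trichotomy x z with h3 | h3 | h3
      · refine hsets x z y ?_ hxz hxy hyz.symm h3 h2
        ext t; simp; tauto
      · exact absurd h3 hxz.ne.elim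
      · refine hsets z x y ?_ hxz.symm hyz.symm hxy h3 h1
        ext t; simp; tauto
  · exact absurd h1 hxy.ne.elim
  · rcases lt_trichotomy x z with h2 | h2 | h2
    · refine hsets y x z ?_ hxy.symm hyz hxz h1 h2
      ext t; simp; tauto
    · exact absurd h2 hxz.ne.elim
    · rcases lt_trichotomy y z with h3 | h3 | h3
      · refine hsets y z x ?_ hyz hxy.symm hxz.symm h3 h2
        ext t; simp; tauto
      · exact absurd h3 hyz.ne.elim
      · refine hsets z y x ?_ hyz.symm hxz.symm hxy.symm h3 h1
        ext t; simp; tauto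

/-- a priori subcubic bound on the number of triangles -/
lemma apriori (hP : NoSusp (G := G)) {K : ℕ} (hK : 9 ≤ K) :
    (G.cliqueFinset 3).card ≤ (K + 1) * n * n := by
  classical
  rcases Finset.eq_empty_or_nonempty (G.cliqueFinset 3) with he | hne
  · simp [he]
  obtain ⟨tr₀, htr₀⟩ := hne
  have htr₀' := (SimpleGraph.mem_cliqueFinset_iff.1 htr₀).card_eq
  obtain ⟨x₀, _⟩ := Finset.card_pos.1 (by omega : 0 < tr₀.card)
  haveI : Inhabited (Fin n) := ⟨x₀⟩
  set AT3 : Finset (Fin n × Fin n × Fin n) :=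
    Finset.univ.filter (fun t => t.1 < t.2.1 ∧ t.2.1 < t.2.2 ∧
      G.Adj t.1 t.2.1 ∧ G.Adj t.1 t.2.2 ∧ G.Adj t.2.1 t.2.2) with hAT3
  -- injection of triangles into sorted triples
  have step1 : (G.cliqueFinset 3).card ≤ AT3.card := by
    set f : Finset (Fin n) → Fin n × Fin n × Fin n := fun tr =>
      if h : ∃ t : Fin n × Fin n × Fin n, t.1 < t.2.1 ∧ t.2.1 < t.2.2 ∧
          G.Adj t.1 t.2.1 ∧ G.Adj t.1 t.2.2 ∧ G.Adj t.2.1 t.2.2 ∧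
          tr = {t.1, t.2.1, t.2.2} then h.choose else default with hf
    apply Finset.card_le_card_of_injOn f
    · intro tr htr
      rw [Finset.mem_coe, SimpleGraph.mem_cliqueFinset_iff] at htr
      obtain ⟨a, b, c, h1, h2, hab, hac, hbc, hset⟩ := sorted3 htr
      have hex : ∃ t : Fin n × Fin n × Fin n, t.1 < t.2.1 ∧ t.2.1 < t.2.2 ∧
          G.Adj t.1 t.2.1 ∧ G.Adj t.1 t.2.2 ∧ G.Adj t.2.1 t.2.2 ∧
          tr = {t.1, t.2.1, t.2.2} := ⟨(a, b, c), h1, h2, hab, hac, hbc, hset⟩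
      have := hex.choose_spec
      rw [hf]
      simp only [dif_pos hex]
      rw [hAT3, Finset.mem_coe, Finset.mem_filter]
      exact ⟨Finset.mem_univ _, this.1, this.2.1, this.2.2.1, this.2.2.2.1, this.2.2.2.2.1⟩
    · intro tr htr tr' htr' heq
      rw [Finset.mem_coe, SimpleGraph.mem_cliqueFinset_iff] at htr htr'
      obtain ⟨a, b, c, h1, h2, hab, hac, hbc, hset⟩ := sorted3 htr
      obtain ⟨a', b', c', h1', h2', hab', hac', hbc', hset'⟩ := sorted3 htr'
      have hex : ∃ t : Fin n × Fin n × Fin n, t.1 < t.2.1 ∧ t.2.1 < t.2.2 ∧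
          G.Adj t.1 t.2.1 ∧ G.Adj t.1 t.2.2 ∧ G.Adj t.2.1 t.2.2 ∧
          tr = {t.1, t.2.1, t.2.2} := ⟨(a, b, c), h1, h2, hab, hac, hbc, hset⟩
      have hex' : ∃ t : Fin n × Fin n × Fin n, t.1 < t.2.1 ∧ t.2.1 < t.2.2 ∧
          G.Adj t.1 t.2.1 ∧ G.Adj t.1 t.2.2 ∧ G.Adj t.2.1 t.2.2 ∧
          tr' = {t.1, t.2.1, t.2.2} := ⟨(a', b', c'), h1', h2', hab', hac', hbc', hset'⟩
      rw [hf] at heq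
      simp only [dif_pos hex, dif_pos hex'] at heq
      have s1 := hex.choose_spec.2.2.2.2.2
      have s2 := hex'.choose_spec.2.2.2.2.2
      rw [s1, s2, heq]
  have step2 : AT3.card ≤
      ∑ q ∈ Finset.univ.filter (fun q : Fin n × Fin n => q.2 ∈ NB G q.1),
        cdF G q.1 q.2 := by
    rw [Finset.card_eq_sum_card_fiberwise (f := fun t : Fin n × Fin n × Fin n => (t.1, t.2.1))
      (t := Finset.univ.filter (fun q : Fin n × Fin n => q.2 ∈ NB G q.1)) ?_]
    · refine Finset.sum_le_sum (fun q hq => ?_)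
      apply Finset.card_le_card_of_injOn (fun t => t.2.2)
      · intro t ht
        rw [Finset.mem_coe, Finset.mem_filter] at ht
        obtain ⟨ht, hteq⟩ := ht
        rw [hAT3, Finset.mem_filter] at ht
        have h1 : t.1 = q.1 := congrArg Prod.fst hteq
        have h2 : t.2.1 = q.2 := congrArg Prod.snd hteq
        rw [Finset.mem_coe, Finset.mem_inter, mem_neighborFinset, mem_neighborFinset, ← h1, ← h2]
        exact ⟨ht.2.2.2.2.1, ht.2.2.2.2.2⟩
      · intro t ht t' ht' heq
        rw [Finset.mem_coe, Finset.mem_filter] at ht ht'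
        have e1 : t.1 = q.1 := congrArg Prod.fst ht.2
        have e2 : t.2.1 = q.2 := congrArg Prod.snd ht.2
        have e1' : t'.1 = q.1 := congrArg Prod.fst ht'.2
        have e2' : t'.2.1 = q.2 := congrArg Prod.snd ht'.2
        have : t.2 = t'.2 := Prod.ext (e2.trans e2'.symm) heq
        exact Prod.ext (e1.trans e1'.symm) this
    · intro t ht
      rw [hAT3, Finset.mem_coe, Finset.mem_filter] at ht
      rw [Finset.mem_coe, Finset.mem_filter, mem_neighborFinset]
      exact ⟨Finset.mem_univ _, ht.2.2.2.1⟩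
  have step3 : ∑ q ∈ Finset.univ.filter (fun q : Fin n × Fin n => q.2 ∈ NB G q.1),
      cdF G q.1 q.2 = ∑ u, ∑ v ∈ NB G u, cdF G u v :=
    pairs_sum (NB G) (fun q => cdF G q.1 q.2)
  have step4 : ∀ u : Fin n, ∑ v ∈ NB G u, cdF G u v ≤ (K + 1) * n := by
    intro u
    rw [← Finset.sum_filter_add_sum_filter_not (NB G u) (fun v => K ≤ cdF G u v)]
    have hsp : (NB G u).filter (fun v => K ≤ cdF G u v) = spouses G K u := rfl
    have h1 : ∑ v ∈ (NB G u).filter (fun v => K ≤ cdF G u v), cdF G u v ≤ n := by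
      rw [hsp]; exact SPsum hP hK u
    have h2 : ∑ v ∈ (NB G u).filter (fun v => ¬ K ≤ cdF G u v), cdF G u v ≤ K * n := by
      calc ∑ v ∈ (NB G u).filter (fun v => ¬ K ≤ cdF G u v), cdF G u v
          ≤ ∑ _v ∈ (NB G u).filter (fun v => ¬ K ≤ cdF G u v), K :=
            Finset.sum_le_sum (fun v hv => by
              have := (Finset.mem_filter.1 hv).2
              omega)
        _ = ((NB G u).filter (fun v => ¬ K ≤ cdF G u v)).card * K := by
            rw [Finset.sum_const, smul_eq_mul]
        _ ≤ n * K := by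
            have : ((NB G u).filter (fun v => ¬ K ≤ cdF G u v)).card ≤ n := by
              calc _ ≤ (Finset.univ : Finset (Fin n)).card :=
                    Finset.card_le_univ _
                _ = n := by simp
            exact Nat.mul_le_mul_right _ this
      rw [mul_comm]
    nlinarith [h1, h2]
  calc (G.cliqueFinset 3).card ≤ AT3.card := step1
    _ ≤ _ := step2
    _ = ∑ u, ∑ v ∈ NB G u, cdF G u v := step3
    _ ≤ ∑ _u : Fin n, (K + 1) * n := Finset.sum_le_sum (fun u _ => step4 u)
    _ = n * ((K + 1) * n) := by rw [Finset.sum_const, smul_eq_mul, Finset.card_univ,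
        Fintype.card_fin]
    _ = (K + 1) * n * n := by ring

variable (G) in
/-- triangles all of whose edges are light -/
def T0set (K : ℕ) : Finset (Finset (Fin n)) :=
  (G.cliqueFinset 3).filter
    (fun tr => ∀ x ∈ tr, ∀ y ∈ tr, G.Adj x y → cdF G x y < K)

/-- every triangle of `G` contains an edge of `G.edgeFinset \ G'.edgeFinset`
whenever `G' ≤ G` is triangle-free -/
lemma cover_lemma {G' : SimpleGraph (Fin n)} [DecidableRel G'.Adj] (hle : G' ≤ G)
    (hfree : G'.CliqueFree 3) {tr : Finset (Fin n)} (htr : tr ∈ G.cliqueFinset 3) :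
    ∃ e ∈ G.edgeFinset \ G'.edgeFinset, ∀ x ∈ e, x ∈ tr := by
  classical
  rw [SimpleGraph.mem_cliqueFinset_iff] at htr
  obtain ⟨a, b, c, hab, hac, hbc, rfl⟩ := is3Clique_iff.1 htr
  by_contra hcon
  push_neg at hcon
  have key : ∀ x y : Fin n, G.Adj x y → x ∈ ({a, b, c} : Finset (Fin n)) →
      y ∈ ({a, b, c} : Finset (Fin n)) → G'.Adj x y := by
    intro x y hxy hx hy
    by_contra hnot
    have hmem : s(x, y) ∈ G.edgeFinset \ G'.edgeFinset := by
      rw [Finset.mem_sdiff, SimpleGraph.mem_edgeFinset, SimpleGraph.mem_edgeFinset,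
        SimpleGraph.mem_edgeSet, SimpleGraph.mem_edgeSet]
      exact ⟨hxy, hnot⟩
    obtain ⟨t, ht, htm⟩ := hcon _ hmem
    rw [Sym2.mem_iff] at ht
    rcases ht with rfl | rfl
    · exact htm hx
    · exact htm hy
  have hmemab : (a : Fin n) ∈ ({a, b, c} : Finset (Fin n)) := by simp
  have hmemb : (b : Fin n) ∈ ({a, b, c} : Finset (Fin n)) := by simp
  have hmemc : (c : Fin n) ∈ ({a, b, c} : Finset (Fin n)) := by simp
  exact hfree {a, b, c} (SimpleGraph.is3Clique_triple_iff.2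
    ⟨key a b hab hmemab hmemb, key a c hac hmemab hmemc, key b c hbc hmemb hmemc⟩)

/-- bound on the all-light triangles from a covering edge set -/
lemma T0_bound {K : ℕ} (s : Finset (Sym2 (Fin n))) (hs : s ⊆ G.edgeFinset)
    (hcov : ∀ tr ∈ G.cliqueFinset 3, ∃ e ∈ s, ∀ x ∈ e, x ∈ tr) :
    (T0set G K).card ≤ K * s.card := by
  classical
  rcases Finset.eq_empty_or_nonempty (T0set G K) with he | hne
  · simp [he]
  obtain ⟨trex, htrex⟩ := hne
  have htrexT : trex ∈ G.cliqueFinset 3 := (Finset.mem_filter.1 htrex).1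
  obtain ⟨e₀, he₀, _⟩ := hcov trex htrexT
  set f : Finset (Fin n) → Sym2 (Fin n) := fun tr =>
    if h : ∃ e ∈ s, ∀ x ∈ e, x ∈ tr then h.choose else e₀ with hf
  have hmapsto : ∀ tr ∈ T0set G K, f tr ∈ s := by
    intro tr htr
    have htT : tr ∈ G.cliqueFinset 3 := (Finset.mem_filter.1 htr).1
    have hex := hcov tr htT
    rw [hf]; simp only [dif_pos hex]
    exact hex.choose_spec.1
  rw [Finset.card_eq_sum_card_fiberwise hmapsto]
  have hper : ∀ e ∈ s, ((T0set G K).filter (fun tr => f tr = e)).card ≤ K := by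
    intro e he
    rcases Finset.eq_empty_or_nonempty ((T0set G K).filter (fun tr => f tr = e)) with h0 | h0
    · rw [h0]; simp
    -- get the endpoints of e
    induction e using Sym2.inductionOn with
    | hf a b =>
    have hadj : G.Adj a b := by
      have := hs he
      rwa [SimpleGraph.mem_edgeFinset, SimpleGraph.mem_edgeSet] at this
    have hfiber : ∀ tr ∈ (T0set G K).filter (fun tr => f tr = s(a, b)),
        a ∈ tr ∧ b ∈ tr ∧ tr ∈ T0set G K := by
      intro tr htr
      rw [Finset.mem_filter] at htr
      obtain ⟨htr0, htrf⟩ := htr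
      have htT : tr ∈ G.cliqueFinset 3 := (Finset.mem_filter.1 htr0).1
      have hex := hcov tr htT
      rw [hf] at htrf
      simp only [dif_pos hex] at htrf
      have hspec := hex.choose_spec.2
      rw [htrf] at hspec
      exact ⟨hspec a (Sym2.mem_mk_left a b), hspec b (Sym2.mem_mk_right a b), htr0⟩
    -- lightness of ab
    obtain ⟨tr₁, htr₁⟩ := h0
    obtain ⟨ha₁, hb₁, h01⟩ := hfiber tr₁ htr₁
    have hlight : cdF G a b < K :=
      (Finset.mem_filter.1 h01).2 a ha₁ b hb₁ hadj
    -- inject the fiber into the common neighborhood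
    have hinj : ((T0set G K).filter (fun tr => f tr = s(a, b))).card
        ≤ ((NB G a ∩ NB G b).image (fun z => ({z} : Finset (Fin n)))).card := by
      apply Finset.card_le_card_of_injOn (fun tr => tr \ {a, b})
      · intro tr htr
        obtain ⟨ha, hb, h0'⟩ := hfiber tr htr
        have htT : G.IsNClique 3 tr :=
          SimpleGraph.mem_cliqueFinset_iff.1 (Finset.mem_filter.1 h0').1
        obtain ⟨z, hztr, hza, hzb, hset, -, haz, hbz⟩ := third_elt htT ha hb hadj.ne
        have hsd : tr \ {a, b} = {z} := by
          rw [hset]; ext t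
          simp only [Finset.mem_sdiff, Finset.mem_insert, Finset.mem_singleton]
          constructor
          · rintro ⟨rfl | rfl | rfl, h2⟩
            · exact absurd (Or.inl rfl) h2
            · exact absurd (Or.inr rfl) h2
            · rfl
          · rintro rfl
            exact ⟨Or.inr (Or.inr rfl), by push_neg; exact ⟨hza, hzb⟩⟩
        simp only [Finset.mem_coe]
        rw [hsd]
        apply Finset.mem_image_of_mem
        rw [Finset.mem_inter, mem_neighborFinset, mem_neighborFinset]
        exact ⟨haz, hbz⟩
      · intro tr htr tr' htr' heq
        rw [Finset.mem_coe] at htr htr'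
        obtain ⟨ha, hb, h0'⟩ := hfiber tr htr
        obtain ⟨ha', hb', h0''⟩ := hfiber tr' htr'
        have htT : G.IsNClique 3 tr :=
          SimpleGraph.mem_cliqueFinset_iff.1 (Finset.mem_filter.1 h0').1
        have htT' : G.IsNClique 3 tr' :=
          SimpleGraph.mem_cliqueFinset_iff.1 (Finset.mem_filter.1 h0'').1
        obtain ⟨z, hztr, hza, hzb, hset, -, -, -⟩ := third_elt htT ha hb hadj.ne
        obtain ⟨z', hztr', hza', hzb', hset', -, -, -⟩ := third_elt htT' ha' hb' hadj.ne
        have hsd : tr \ {a, b} = {z} := by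
          rw [hset]; ext t
          simp only [Finset.mem_sdiff, Finset.mem_insert, Finset.mem_singleton]
          constructor
          · rintro ⟨rfl | rfl | rfl, h2⟩
            · exact absurd (Or.inl rfl) h2
            · exact absurd (Or.inr rfl) h2
            · rfl
          · rintro rfl
            exact ⟨Or.inr (Or.inr rfl), by push_neg; exact ⟨hza, hzb⟩⟩
        have hsd' : tr' \ {a, b} = {z'} := by
          rw [hset']; ext t
          simp only [Finset.mem_sdiff, Finset.mem_insert, Finset.mem_singleton]
          constructor
          · rintro ⟨rfl | rfl | rfl, h2⟩
            · exact absurd (Or.inl rfl) h2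
            · exact absurd (Or.inr rfl) h2
            · rfl
          · rintro rfl
            exact ⟨Or.inr (Or.inr rfl), by push_neg; exact ⟨hza', hzb'⟩⟩
        simp only [] at heq
        rw [hsd, hsd'] at heq
        have : z = z' := by
          have := Finset.mem_singleton.1 (heq ▸ Finset.mem_singleton_self z)
          exact this
        rw [hset, hset', this]
    calc ((T0set G K).filter (fun tr => f tr = s(a, b))).card
        ≤ ((NB G a ∩ NB G b).image (fun z => ({z} : Finset (Fin n)))).card := hinj
      _ ≤ (NB G a ∩ NB G b).card := Finset.card_image_le
      _ ≤ K := le_of_lt hlight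
  calc ∑ e ∈ s, ((T0set G K).filter (fun tr => f tr = e)).card
      ≤ ∑ _e ∈ s, K := Finset.sum_le_sum hper
    _ = K * s.card := by rw [Finset.sum_const, smul_eq_mul, mul_comm]

variable (G) in
/-- predicate: triangle contains two heavy edges sharing a vertex -/
def HPair (K : ℕ) (tr : Finset (Fin n)) : Prop :=
  ∃ x ∈ tr, ∃ y ∈ tr, ∃ z ∈ tr, y ≠ z ∧ G.Adj x y ∧ K ≤ cdF G x y ∧
    G.Adj x z ∧ K ≤ cdF G x z

instance (K : ℕ) (tr : Finset (Fin n)) : Decidable (HPair G K tr) := by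
  unfold HPair; infer_instance

variable (G) in
/-- triangles that are not all-light -/
def TRset (K : ℕ) : Finset (Finset (Fin n)) :=
  (G.cliqueFinset 3).filter
    (fun tr => ¬ ∀ x ∈ tr, ∀ y ∈ tr, G.Adj x y → cdF G x y < K)

variable (G) in
def T2set (K : ℕ) : Finset (Finset (Fin n)) := (TRset G K).filter (HPair G K)

variable (G) in
def T1set (K : ℕ) : Finset (Finset (Fin n)) :=
  (TRset G K).filter (fun tr => ¬ HPair G K tr)

lemma tri_split (K : ℕ) : (G.cliqueFinset 3).card =
    (T0set G K).card + (T2set G K).card + (T1set G K).card := by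
  classical
  have h1 : (T0set G K).card + (TRset G K).card = (G.cliqueFinset 3).card :=
    Finset.card_filter_add_card_filter_not _
  have h2 : (T2set G K).card + (T1set G K).card = (TRset G K).card :=
    Finset.card_filter_add_card_filter_not _
  omega

/-- every triangle in `T1set` gives a witnessed heavy edge (in both directions) -/
lemma T1_wit {K : ℕ} {tr : Finset (Fin n)} (h : tr ∈ T1set G K) :
    ∃ a b c : Fin n, tr = {a, b, c} ∧ wit G K a b c ∧ wit G K b a c := by
  classical
  rw [T1set, Finset.mem_filter] at h
  obtain ⟨hR, hnp⟩ := h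
  rw [TRset, Finset.mem_filter] at hR
  obtain ⟨hT, hnl⟩ := hR
  push_neg at hnl
  obtain ⟨a, ha, b, hb, hab, hcd⟩ := hnl
  have hclique := SimpleGraph.mem_cliqueFinset_iff.1 hT
  obtain ⟨c, hc, hca, hcb, hset, -, hac, hbc⟩ := third_elt hclique ha hb hab.ne
  have hlac : cdF G a c < K := by
    by_contra hcon
    push_neg at hcon
    exact hnp ⟨a, ha, b, hb, c, hc, (Ne.symm hcb), hab, (by omega), hac, hcon⟩
  have hlbc : cdF G b c < K := by
    by_contra hcon
    push_neg at hcon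
    exact hnp ⟨b, hb, a, ha, c, hc, (Ne.symm hca), hab.symm,
      (by rw [cdF_comm]; omega), hbc, hcon⟩
  refine ⟨a, b, c, hset, ?_, ?_⟩
  · exact ⟨hab, by omega, hac, hbc, hlac, hlbc⟩
  · exact ⟨hab.symm, by rw [cdF_comm]; omega, hbc, hac, hlbc, hlac⟩

variable (G) in
/-- directed pairs (endpoint of a heavy edge, light witness) -/
def DPset (K : ℕ) : Finset (Fin n × Fin n) :=
  Finset.univ.filter (fun p => ∃ v, wit G K p.1 v p.2)

lemma DP_T1 (hP : NoSusp (G := G)) {K : ℕ} (hK : 9 ≤ K) :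
    2 * (T1set G K).card ≤ (DPset G K).card := by
  classical
  set F : Fin n × Fin n → Finset (Fin n) := fun p =>
    if h : ∃ v, wit G K p.1 v p.2 then {p.1, h.choose, p.2} else ∅ with hF
  set DP' : Finset (Fin n × Fin n) := (DPset G K).filter (fun p => F p ∈ T1set G K)
    with hDP'
  have hmaps : ∀ p ∈ DP', F p ∈ T1set G K := fun p hp => (Finset.mem_filter.1 hp).2
  have hfib := Finset.card_eq_sum_card_fiberwise hmaps
  have hper : ∀ tr ∈ T1set G K, 2 ≤ (DP'.filter (fun p => F p = tr)).card := by
    intro tr htr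
    obtain ⟨a, b, c, hset, hw1, hw2⟩ := T1_wit htr
    have hex1 : ∃ v, wit G K a v c := ⟨b, hw1⟩
    have hex2 : ∃ v, wit G K b v c := ⟨a, hw2⟩
    have hF1 : F (a, c) = tr := by
      rw [hF]; simp only [dif_pos hex1]
      have := UQ hP hK hex1.choose_spec hw1
      rw [this, hset]
    have hF2 : F (b, c) = tr := by
      rw [hF]; simp only [dif_pos hex2]
      have := UQ hP hK hex2.choose_spec hw2
      rw [this, hset]
      exact Finset.insert_comm b a {c}
    have hm1 : (a, c) ∈ DP'.filter (fun p => F p = tr) := by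
      rw [Finset.mem_filter, hDP', Finset.mem_filter, DPset, Finset.mem_filter]
      exact ⟨⟨⟨Finset.mem_univ _, hex1⟩, hF1 ▸ htr⟩, hF1⟩
    have hm2 : (b, c) ∈ DP'.filter (fun p => F p = tr) := by
      rw [Finset.mem_filter, hDP', Finset.mem_filter, DPset, Finset.mem_filter]
      exact ⟨⟨⟨Finset.mem_univ _, hex2⟩, hF2 ▸ htr⟩, hF2⟩
    have hab : a ≠ b := hw1.1.ne
    have hsub : ({(a, c), (b, c)} : Finset (Fin n × Fin n)) ⊆
        DP'.filter (fun p => F p = tr) := by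
      intro p hp
      rw [Finset.mem_insert, Finset.mem_singleton] at hp
      rcases hp with rfl | rfl
      · exact hm1
      · exact hm2
    have hcard2 : ({(a, c), (b, c)} : Finset (Fin n × Fin n)).card = 2 := by
      rw [Finset.card_insert_of_notMem (by
        rw [Finset.mem_singleton]
        intro hcon
        exact hab (congrArg Prod.fst hcon)), Finset.card_singleton]
    calc 2 = ({(a, c), (b, c)} : Finset (Fin n × Fin n)).card := hcard2.symm
      _ ≤ _ := Finset.card_le_card hsub
  calc 2 * (T1set G K).card = ∑ _tr ∈ T1set G K, 2 := by
        rw [Finset.sum_const, smul_eq_mul, mul_comm]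
    _ ≤ ∑ tr ∈ T1set G K, (DP'.filter (fun p => F p = tr)).card :=
        Finset.sum_le_sum hper
    _ = DP'.card := hfib.symm
    _ ≤ (DPset G K).card := Finset.card_le_card (Finset.filter_subset _ _)

variable (G) in
def DPd (K : ℕ) : Finset (Fin n × Fin n) :=
  (DPset G K).filter (fun p => (p.2, p.1) ∈ DPset G K)

variable (G) in
/-- light neighborhood -/
def lnb (K : ℕ) (u : Fin n) : Finset (Fin n) :=
  (NB G u).filter (fun y => cdF G u y < K)

variable (G) in
def LGset (K : ℕ) : Finset (Fin n × Fin n) :=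
  Finset.univ.filter (fun q : Fin n × Fin n => q.2 ∈ lnb G K q.1)

lemma lnb_symm {K : ℕ} {u v : Fin n} (h : v ∈ lnb G K u) : u ∈ lnb G K v := by
  rw [lnb, Finset.mem_filter, mem_neighborFinset] at h ⊢
  exact ⟨h.1.symm, by rw [cdF_comm]; exact h.2⟩

lemma DP_subset_LG (K : ℕ) : DPset G K ⊆ LGset G K := by
  intro p hp
  rw [DPset, Finset.mem_filter] at hp
  obtain ⟨-, v, hw⟩ := hp
  rw [LGset, Finset.mem_filter, lnb, Finset.mem_filter, mem_neighborFinset]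
  exact ⟨Finset.mem_univ _, hw.2.2.1, hw.2.2.2.2.1⟩

lemma DPnd_bound (K : ℕ) :
    2 * ((DPset G K) \ (DPd G K)).card ≤ (LGset G K).card := by
  classical
  have hcard : (((DPset G K) \ (DPd G K)) ×ˢ (Finset.univ : Finset Bool)).card
      = 2 * ((DPset G K) \ (DPd G K)).card := by
    rw [Finset.card_product]
    simp [mul_comm]
  rw [← hcard]
  apply Finset.card_le_card_of_injOn
    (fun pb => if pb.2 then pb.1 else (pb.1.2, pb.1.1))
  · rintro ⟨p, b⟩ hpb
    rw [Finset.mem_coe, Finset.mem_product] at hpb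
    have hp : p ∈ DPset G K := (Finset.mem_sdiff.1 hpb.1).1
    have hLG := DP_subset_LG K hp
    cases b
    · simp only [if_neg, Finset.mem_coe]
      rw [LGset, Finset.mem_filter] at hLG ⊢
      exact ⟨Finset.mem_univ _, lnb_symm hLG.2⟩
    · simpa using hLG
  · rintro ⟨p, b⟩ hpb ⟨q, c⟩ hqc heq
    rw [Finset.mem_coe, Finset.mem_product] at hpb hqc
    have hp := Finset.mem_sdiff.1 hpb.1
    have hq := Finset.mem_sdiff.1 hqc.1
    have hpadj : p.1 ≠ p.2 := by
      obtain ⟨-, v, hw⟩ := Finset.mem_filter.1 hp.1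
      exact hw.2.2.1.ne
    cases b <;> cases c <;> simp only [if_pos, if_neg, Bool.false_eq_true,
      not_false_eq_true] at heq
    · -- both false : swapped equal
      have : p = q := by
        have h1 : p.2 = q.2 := congrArg Prod.fst heq
        have h2 : p.1 = q.1 := congrArg Prod.snd heq
        exact Prod.ext h2 h1
      rw [this]
    · -- p swapped = q
      exfalso
      have : q = (p.2, p.1) := heq.symm
      rw [this] at hq
      exact hq.2 (by
        rw [DPd, Finset.mem_filter]
        exact ⟨hq.1, by simpa using hp.1⟩)
    · -- p = q swapped
      exfalso
      have : p = (q.2, q.1) := heq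
      rw [this] at hp
      exact hp.2 (by
        rw [DPd, Finset.mem_filter]
        exact ⟨hp.1, by simpa using hq.1⟩)
    · rw [heq]

lemma LG_card (K : ℕ) : (LGset G K).card = ∑ u, (lnb G K u).card :=
  pairs_card (lnb G K)

lemma mantel_nat (K : ℕ) :
    2 * ∑ u, (lnb G K u).card ^ 2 ≤ (n + K) * ∑ u, (lnb G K u).card := by
  classical
  have h1 : ∑ q ∈ LGset G K, (lnb G K q.1).card = ∑ u, (lnb G K u).card ^ 2 := by
    rw [LGset, pairs_sum (lnb G K) (fun q => (lnb G K q.1).card)]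
    refine Finset.sum_congr rfl (fun u _ => ?_)
    dsimp only
    rw [Finset.sum_const, smul_eq_mul, sq]
  have h2 : ∑ q ∈ LGset G K, (lnb G K q.2).card = ∑ u, (lnb G K u).card ^ 2 := by
    rw [← h1]
    apply Finset.sum_nbij' (i := Prod.swap) (j := Prod.swap)
    · intro q hq
      rw [LGset, Finset.mem_filter] at hq ⊢
      exact ⟨Finset.mem_univ _, lnb_symm hq.2⟩
    · intro q hq
      rw [LGset, Finset.mem_filter] at hq ⊢
      exact ⟨Finset.mem_univ _, lnb_symm hq.2⟩
    · intro q _; rfl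
    · intro q _; rfl
    · intro q _; rfl
  have hkey : ∀ q ∈ LGset G K, (lnb G K q.1).card + (lnb G K q.2).card ≤ n + K := by
    intro q hq
    rw [LGset, Finset.mem_filter] at hq
    have hq2 := hq.2
    rw [lnb, Finset.mem_filter, mem_neighborFinset] at hq2
    have hun : (lnb G K q.1 ∪ lnb G K q.2).card + (lnb G K q.1 ∩ lnb G K q.2).card
        = (lnb G K q.1).card + (lnb G K q.2).card :=
      Finset.card_union_add_card_inter _ _
    have hu : (lnb G K q.1 ∪ lnb G K q.2).card ≤ n := by
      calc _ ≤ (Finset.univ : Finset (Fin n)).card := Finset.card_le_univ _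
        _ = n := by simp
    have hi : (lnb G K q.1 ∩ lnb G K q.2).card ≤ K := by
      have hsub : lnb G K q.1 ∩ lnb G K q.2 ⊆ NB G q.1 ∩ NB G q.2 :=
        Finset.inter_subset_inter (Finset.filter_subset _ _) (Finset.filter_subset _ _)
      have := Finset.card_le_card hsub
      have hlt : cdF G q.1 q.2 < K := hq2.2
      have hcdeq : cdF G q.1 q.2 = (NB G q.1 ∩ NB G q.2).card := rfl
      omega
    omega
  calc 2 * ∑ u, (lnb G K u).card ^ 2
      = ∑ q ∈ LGset G K, ((lnb G K q.1).card + (lnb G K q.2).card) := by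
        rw [Finset.sum_add_distrib, h1, h2]; ring
    _ ≤ ∑ _q ∈ LGset G K, (n + K) := Finset.sum_le_sum hkey
    _ = (LGset G K).card * (n + K) := by rw [Finset.sum_const, smul_eq_mul]
    _ = (n + K) * ∑ u, (lnb G K u).card := by rw [LG_card, mul_comm]

lemma DPd_bound (hP : NoSusp (G := G)) {K : ℕ} (hK : 9 ≤ K) :
    (DPd G K).card ≤ 2 * ∑ u, (spouses G K u).card := by
  classical
  have hmaps : ∀ p ∈ DPd G K, p.1 ∈ (Finset.univ : Finset (Fin n)) :=
    fun p _ => Finset.mem_univ _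
  rw [Finset.card_eq_sum_card_fiberwise hmaps]
  have hper : ∀ u : Fin n, ((DPd G K).filter (fun p => p.1 = u)).card
      ≤ 2 * (spouses G K u).card := by
    intro u
    have hstep : ((DPd G K).filter (fun p => p.1 = u)).card
        ≤ ((spouses G K u).biUnion (fun v => DS G u v)).card := by
      apply Finset.card_le_card_of_injOn (fun p => p.2)
      · intro p hp
        rw [Finset.mem_coe, Finset.mem_filter] at hp
        obtain ⟨hpd, rfl⟩ := hp
        rw [DPd, Finset.mem_filter] at hpd
        obtain ⟨hpDP, hrev⟩ := hpd
        rw [DPset, Finset.mem_filter] at hpDP hrev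
        obtain ⟨-, v, hw⟩ := hpDP
        obtain ⟨-, z, hw'⟩ := hrev
        rw [Finset.mem_coe, Finset.mem_biUnion]
        refine ⟨v, wit_spouse hw, ?_⟩
        rw [DS, Finset.mem_filter, Finset.mem_inter, mem_neighborFinset,
          mem_neighborFinset]
        refine ⟨⟨hw.2.2.1, hw.2.2.2.1⟩, z, ?_, hw'.2.2.2.1.symm, hw'.1⟩
        intro hzv
        rw [hzv] at hw'
        have h1 : cdF G v p.1 < K := hw'.2.2.2.2.2
        have h2 : K ≤ cdF G p.1 v := hw.2.1
        rw [cdF_comm] at h1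
        omega
      · intro p hp q hq heq
        rw [Finset.mem_coe, Finset.mem_filter] at hp hq
        exact Prod.ext (hp.2.trans hq.2.symm) heq
    calc ((DPd G K).filter (fun p => p.1 = u)).card
        ≤ ((spouses G K u).biUnion (fun v => DS G u v)).card := hstep
      _ ≤ ∑ v ∈ spouses G K u, (DS G u v).card := Finset.card_biUnion_le
      _ ≤ ∑ _v ∈ spouses G K u, 2 := Finset.sum_le_sum (fun v hv => by
          obtain ⟨hadj, hcd⟩ := spouses_mem hv
          exact claimM hP hadj (by omega))
      _ = 2 * (spouses G K u).card := by rw [Finset.sum_const, smul_eq_mul, mul_comm]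
  calc ∑ u, ((DPd G K).filter (fun p => p.1 = u)).card
      ≤ ∑ u, 2 * (spouses G K u).card := Finset.sum_le_sum (fun u _ => hper u)
    _ = 2 * ∑ u, (spouses G K u).card := by rw [Finset.mul_sum]

lemma SPP_total (hP : NoSusp (G := G)) {K : ℕ} (hK : 9 ≤ K) :
    K * ∑ u, (spouses G K u).card ≤ n * n := by
  calc K * ∑ u, (spouses G K u).card = ∑ u, K * (spouses G K u).card := by
        rw [Finset.mul_sum]
    _ ≤ ∑ _u : Fin n, n := Finset.sum_le_sum (fun u _ => spouse_card hP hK u)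
    _ = n * n := by rw [Finset.sum_const, smul_eq_mul, Finset.card_univ, Fintype.card_fin]

lemma T2_bound (hP : NoSusp (G := G)) {K : ℕ} (hK : 9 ≤ K) :
    (T2set G K).card ≤ 2 * ∑ u, (spouses G K u).card := by
  classical
  rcases Finset.eq_empty_or_nonempty (T2set G K) with he | hne
  · simp [he]
  obtain ⟨trex, htrex⟩ := hne
  have htrexT : trex ∈ G.cliqueFinset 3 :=
    (Finset.mem_filter.1 ((Finset.mem_filter.1 htrex).1)).1
  have hcards := (SimpleGraph.mem_cliqueFinset_iff.1 htrexT).card_eq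
  obtain ⟨x₀, _⟩ := Finset.card_pos.1 (by omega : 0 < trex.card)
  haveI : Inhabited (Fin n) := ⟨x₀⟩
  -- the structure predicate
  set P : Finset (Fin n) → Fin n × Fin n × Fin n → Prop := fun tr t =>
    t.2.1 ∈ spouses G K t.1 ∧ t.2.2 ∈ spouses G K t.1 ∧ G.Adj t.2.1 t.2.2 ∧
      tr = {t.1, t.2.1, t.2.2} with hPdef
  have hstruct : ∀ tr ∈ T2set G K, ∃ t, P tr t := by
    intro tr htr
    rw [T2set, Finset.mem_filter] at htr
    obtain ⟨hR, x, hx, y, hy, z, hz, hyz, hxy, hcxy, hxz, hcxz⟩ := htr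
    have hT : tr ∈ G.cliqueFinset 3 := (Finset.mem_filter.1 hR).1
    have hclique := SimpleGraph.mem_cliqueFinset_iff.1 hT
    have hadjyz : G.Adj y z := hclique.1 (Finset.mem_coe.2 hy) (Finset.mem_coe.2 hz) hyz
    have hset : tr = {x, y, z} := by
      have hsub : ({x, y, z} : Finset (Fin n)) ⊆ tr := by
        intro a ha
        simp only [Finset.mem_insert, Finset.mem_singleton] at ha
        rcases ha with rfl | rfl | rfl <;> assumption
      have hc3 : ({x, y, z} : Finset (Fin n)).card = 3 := by
        rw [Finset.card_insert_of_notMem, Finset.card_insert_of_notMem,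
          Finset.card_singleton]
        · simpa using hyz
        · simp only [Finset.mem_insert, Finset.mem_singleton]
          push_neg
          exact ⟨hxy.ne, hxz.ne⟩
      exact (Finset.eq_of_subset_of_card_le hsub (by rw [hclique.card_eq, hc3])).symm
    refine ⟨(x, y, z), ?_, ?_, hadjyz, hset⟩
    · rw [spouses, Finset.mem_filter, mem_neighborFinset]; exact ⟨hxy, hcxy⟩
    · rw [spouses, Finset.mem_filter, mem_neighborFinset]; exact ⟨hxz, hcxz⟩
  set f : Finset (Fin n) → Fin n × Fin n × Fin n := fun tr =>
    if h : ∃ t, P tr t then h.choose else default with hfdef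
  set AT : Finset (Fin n × Fin n × Fin n) := Finset.univ.filter (fun t =>
    t.2.1 ∈ spouses G K t.1 ∧ t.2.2 ∈ spouses G K t.1 ∧ G.Adj t.2.1 t.2.2) with hAT
  have step1 : (T2set G K).card ≤ AT.card := by
    apply Finset.card_le_card_of_injOn f
    · intro tr htr
      have hex := hstruct tr htr
      rw [hfdef]
      simp only [dif_pos hex]
      have hspec := hex.choose_spec
      rw [hAT, Finset.mem_coe, Finset.mem_filter]
      exact ⟨Finset.mem_univ _, hspec.1, hspec.2.1, hspec.2.2.1⟩
    · intro tr htr tr' htr' heq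
      rw [Finset.mem_coe] at htr htr'
      have hex := hstruct tr htr
      have hex' := hstruct tr' htr'
      rw [hfdef] at heq
      simp only [dif_pos hex, dif_pos hex'] at heq
      have s1 := hex.choose_spec.2.2.2
      have s2 := hex'.choose_spec.2.2.2
      rw [s1, s2, heq]
  have step2 : AT.card ≤ 2 * ∑ u, (spouses G K u).card := by
    have hmaps : ∀ t ∈ AT, (t.1, t.2.1) ∈
        Finset.univ.filter (fun q : Fin n × Fin n => q.2 ∈ spouses G K q.1) := by
      intro t ht
      rw [hAT, Finset.mem_filter] at ht
      rw [Finset.mem_filter]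
      exact ⟨Finset.mem_univ _, ht.2.1⟩
    rw [Finset.card_eq_sum_card_fiberwise hmaps]
    have hper : ∀ q ∈ Finset.univ.filter
        (fun q : Fin n × Fin n => q.2 ∈ spouses G K q.1),
        (AT.filter (fun t => (t.1, t.2.1) = q)).card ≤ 2 := by
      intro q hq
      rw [Finset.mem_filter] at hq
      obtain ⟨-, hsp⟩ := hq
      obtain ⟨hadj, hcd⟩ := spouses_mem hsp
      have hinj : (AT.filter (fun t => (t.1, t.2.1) = q)).card ≤ (DS G q.1 q.2).card := by
        apply Finset.card_le_card_of_injOn (fun t => t.2.2)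
        · intro t ht
          rw [Finset.mem_coe, Finset.mem_filter, hAT, Finset.mem_filter] at ht
          obtain ⟨⟨-, hy, hz, hadjyz⟩, hteq⟩ := ht
          have e1 : t.1 = q.1 := congrArg Prod.fst hteq
          have e2 : t.2.1 = q.2 := congrArg Prod.snd hteq
          rw [← e1, ← e2]
          obtain ⟨hadjz, hcdz⟩ := spouses_mem hz
          obtain ⟨zz, hzz⟩ := nonempty_aux hcdz ({t.2.1} : Finset (Fin n)) (by simp; omega)
          rw [Finset.mem_sdiff, Finset.mem_inter, mem_neighborFinset,
            mem_neighborFinset, Finset.mem_singleton] at hzz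
          rw [DS, Finset.mem_coe, Finset.mem_filter, Finset.mem_inter, mem_neighborFinset,
            mem_neighborFinset]
          exact ⟨⟨hadjz, hadjyz⟩, zz, hzz.2, hzz.1.1, hzz.1.2⟩
        · intro t ht t' ht' heq
          rw [Finset.mem_coe, Finset.mem_filter] at ht ht'
          have e1 : t.1 = q.1 := congrArg Prod.fst ht.2
          have e2 : t.2.1 = q.2 := congrArg Prod.snd ht.2
          have e1' : t'.1 = q.1 := congrArg Prod.fst ht'.2
          have e2' : t'.2.1 = q.2 := congrArg Prod.snd ht'.2
          exact Prod.ext (e1.trans e1'.symm) (Prod.ext (e2.trans e2'.symm) heq)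
      calc (AT.filter (fun t => (t.1, t.2.1) = q)).card ≤ (DS G q.1 q.2).card := hinj
        _ ≤ 2 := claimM hP hadj (by omega)
    calc ∑ q ∈ Finset.univ.filter (fun q : Fin n × Fin n => q.2 ∈ spouses G K q.1),
          (AT.filter (fun t => (t.1, t.2.1) = q)).card
        ≤ ∑ _q ∈ Finset.univ.filter
            (fun q : Fin n × Fin n => q.2 ∈ spouses G K q.1), 2 :=
          Finset.sum_le_sum hper
      _ = (Finset.univ.filter
            (fun q : Fin n × Fin n => q.2 ∈ spouses G K q.1)).card * 2 := by
          rw [Finset.sum_const, smul_eq_mul]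
      _ = 2 * ∑ u, (spouses G K u).card := by
          rw [pairs_card (spouses G K), mul_comm]
  omega

end Aux2

namespace AuxFinal
open Aux2

lemma triCount_eq {n : ℕ} (G : SimpleGraph (Fin n)) [DecidableRel G.Adj] :
    ({s : Finset (Fin n) | G.IsNClique 3 s}).ncard = (G.cliqueFinset 3).card := by
  have h : {s : Finset (Fin n) | G.IsNClique 3 s} = ↑(G.cliqueFinset 3) := by
    ext t
    simp [SimpleGraph.mem_cliqueFinset_iff]
  rw [h, Set.ncard_coe_finset]

set_option maxHeartbeats 2000000 in
/-- main quantitative lemma, for a fixed graph -/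
lemma main_bound {n : ℕ} (G : SimpleGraph (Fin n)) [DecidableRel G.Adj]
    (hP : NoSusp (G := G)) {K : ℕ} (hK : 9 ≤ K) (ε₂ : ℝ) (hε₂ : 0 < ε₂) (hε₂1 : ε₂ ≤ 1)
    (hbig : ((K + 1) * n * n : ℝ) < SimpleGraph.triangleRemovalBound ε₂ * n ^ 3) :
    ((G.cliqueFinset 3).card : ℝ) ≤
      K * ε₂ * n ^ 2 + 3 * n ^ 2 / K + n * (n + K) / 8 := by
  classical
  have hKpos : (0:ℝ) < K := by positivity
  -- apply the removal lemma
  have hsmall : ((G.cliqueFinset 3).card : ℝ) <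
      SimpleGraph.triangleRemovalBound ε₂ * (Fintype.card (Fin n)) ^ 3 := by
    rw [Fintype.card_fin]
    calc ((G.cliqueFinset 3).card : ℝ) ≤ ((K + 1) * n * n : ℕ) := by
          exact_mod_cast apriori hP hK
      _ = ((K + 1) * n * n : ℝ) := by push_cast; ring
      _ < _ := hbig
  obtain ⟨G', hle, hdec, hcard, hfree⟩ := G.triangle_removal (by exact_mod_cast hsmall)
  set s : Finset (Sym2 (Fin n)) := G.edgeFinset \ G'.edgeFinset with hs
  have hssub : s ⊆ G.edgeFinset := Finset.sdiff_subset
  have hscard : (s.card : ℝ) < ε₂ * n ^ 2 := by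
    rw [hs, Finset.card_sdiff_of_subset (SimpleGraph.edgeFinset_mono hle)]
    rw [Nat.cast_sub (Finset.card_le_card (SimpleGraph.edgeFinset_mono hle))]
    calc ((G.edgeFinset.card : ℝ) - G'.edgeFinset.card)
        < ε₂ * ((Fintype.card (Fin n)) ^ 2 : ℕ) := hcard
      _ = ε₂ * n ^ 2 := by rw [Fintype.card_fin]; push_cast; ring
  have hcov : ∀ tr ∈ G.cliqueFinset 3, ∃ e ∈ s, ∀ x ∈ e, x ∈ tr :=
    fun tr htr => cover_lemma hle hfree htr
  -- the ℕ-level inequalities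
  have hA := tri_split (G := G) K
  have hB := T0_bound (G := G) (K := K) s hssub hcov
  have hC := DP_T1 hP hK
  have hDPsplit : ((DPset G K) \ (DPd G K)).card + (DPd G K).card = (DPset G K).card :=
    Finset.card_sdiff_add_card_eq_card (Finset.filter_subset _ _)
  have hD := DPnd_bound (G := G) K
  have hE := DPd_bound hP hK
  have hF := T2_bound hP hK
  have hG := SPP_total hP hK
  have hH := mantel_nat (G := G) K
  have hLG := LG_card (G := G) K
  -- Chebyshev/Cauchy-Schwarz step, in ℝ
  set S : ℕ := ∑ u, (lnb G K u).card with hSdef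
  have hchev : ((S : ℝ)) ^ 2 ≤ n * ∑ u, ((lnb G K u).card : ℝ) ^ 2 := by
    have := sq_sum_le_card_mul_sum_sq (s := (Finset.univ : Finset (Fin n)))
      (f := fun u => ((lnb G K u).card : ℝ))
    rw [Finset.card_univ, Fintype.card_fin] at this
    calc ((S : ℝ)) ^ 2 = (∑ u, ((lnb G K u).card : ℝ)) ^ 2 := by
          rw [hSdef]; push_cast; ring
      _ ≤ _ := this
  have hHr : 2 * ∑ u, ((lnb G K u).card : ℝ) ^ 2 ≤ (n + K) * S := by
    calc 2 * ∑ u, ((lnb G K u).card : ℝ) ^ 2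
        = ((2 * ∑ u, (lnb G K u).card ^ 2 : ℕ) : ℝ) := by push_cast; ring
      _ ≤ (((n + K) * S : ℕ) : ℝ) := by exact_mod_cast hH
      _ = (n + K) * S := by push_cast; ring
  have hSbound : (S : ℝ) ≤ n * (n + K) / 2 := by
    rcases eq_or_lt_of_le (Nat.cast_nonneg (α := ℝ) S) with h0 | h0
    · rw [← h0]; positivity
    · have h2 : 2 * (S:ℝ) * (S:ℝ) ≤ (n * (n + K)) * (S:ℝ) := by nlinarith [hchev, hHr]
      have := le_of_mul_le_mul_right h2 h0
      linarith
  -- put everything together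
  set M : ℕ := ∑ u, (spouses G K u).card with hMdef
  have hMr : (M : ℝ) ≤ n * n / K := by
    rw [div_eq_inv_mul, ← mul_le_mul_iff_right₀ hKpos]
    calc (K:ℝ) * M = ((K * M : ℕ) : ℝ) := by push_cast; ring
      _ ≤ ((n * n : ℕ) : ℝ) := by exact_mod_cast hG
      _ = (n : ℝ) * n := by push_cast; ring
      _ = (K:ℝ) * ((K:ℝ)⁻¹ * ((n:ℝ) * n)) := by
          field_simp
  have hT1r : ((T1set G K).card : ℝ) ≤ (S : ℝ) / 4 + M := by
    have c1 : (2 * (T1set G K).card : ℝ) ≤ ((DPset G K).card : ℝ) := by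
      exact_mod_cast hC
    have c2 : (((DPset G K) \ (DPd G K)).card : ℝ) ≤ (S : ℝ) / 2 := by
      have : (2 * ((DPset G K) \ (DPd G K)).card : ℝ) ≤ (S : ℝ) := by
        rw [← hLG]; exact_mod_cast hD
      linarith
    have c3 : ((DPd G K).card : ℝ) ≤ 2 * M := by exact_mod_cast hE
    have c4 : ((DPset G K).card : ℝ) =
        (((DPset G K) \ (DPd G K)).card : ℝ) + ((DPd G K).card : ℝ) := by
      exact_mod_cast hDPsplit.symm
    push_cast at c1
    linarith
  have hT0r : ((T0set G K).card : ℝ) ≤ K * ε₂ * n ^ 2 := by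
    calc ((T0set G K).card : ℝ) ≤ ((K * s.card : ℕ) : ℝ) := by exact_mod_cast hB
      _ = (K : ℝ) * s.card := by push_cast; ring
      _ ≤ (K : ℝ) * (ε₂ * n ^ 2) := by
          apply mul_le_mul_of_nonneg_left (le_of_lt hscard) (le_of_lt hKpos)
      _ = K * ε₂ * n ^ 2 := by ring
  have hT2r : ((T2set G K).card : ℝ) ≤ 2 * M := by exact_mod_cast hF
  have hAr : ((G.cliqueFinset 3).card : ℝ) =
      ((T0set G K).card : ℝ) + ((T2set G K).card : ℝ) + ((T1set G K).card : ℝ) := by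
    exact_mod_cast hA
  rw [hAr]
  have h3M : (3 : ℝ) * M ≤ 3 * ((n:ℝ) ^ 2 / K) := by
    have hnn : (n : ℝ) * n = (n:ℝ)^2 := by ring
    rw [hnn] at hMr
    linarith
  calc ((T0set G K).card : ℝ) + ((T2set G K).card : ℝ) + ((T1set G K).card : ℝ)
      ≤ K * ε₂ * n ^ 2 + 2 * M + ((S:ℝ)/4 + M) := by linarith
    _ = K * ε₂ * n ^ 2 + 3 * M + (S:ℝ)/4 := by ring
    _ ≤ K * ε₂ * n ^ 2 + 3 * ((n:ℝ) ^ 2 / K) + (n * (n + K) / 2) / 4 := by linarith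
    _ = K * ε₂ * n ^ 2 + 3 * n ^ 2 / K + n * (n + K) / 8 := by ring

end AuxFinal

set_option maxHeartbeats 2000000 in
/-- `ex(n, K_3, \widehat{P}_4) ≤ n²/8 + o(n²)`. -/
theorem suspension_P4_asymptotic_upper (ε : ℝ) (hε : 0 < ε) :
    ∃ n0 : ℕ, ∀ n : ℕ, n0 ≤ n → ∀ G : SimpleGraph (Fin n),
      ¬ containsCopy (susp (pathGraph 5)) G →
      (triCount G : ℝ) ≤ (n : ℝ) ^ 2 / 8 + ε * (n : ℝ) ^ 2 := by
  classical
  set ε' : ℝ := min ε (1/2) with hε'def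
  have hε'pos : 0 < ε' := lt_min hε (by norm_num)
  have hε'le : ε' ≤ ε := min_le_left _ _
  have hε'half : ε' ≤ 1/2 := min_le_right _ _
  set K : ℕ := max 9 ⌈(12:ℝ)/ε'⌉₊ with hKdef
  have hK9 : 9 ≤ K := le_max_left _ _
  have hK9r : (9:ℝ) ≤ K := by exact_mod_cast hK9
  have hKposr : (0:ℝ) < K := by linarith
  have hK12 : 12/ε' ≤ (K:ℝ) := by
    refine le_trans (Nat.le_ceil _) ?_
    exact_mod_cast le_max_right 9 ⌈(12:ℝ)/ε'⌉₊
  set ε₂ : ℝ := ε'/(8*K) with hε₂def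
  have hε₂pos : 0 < ε₂ := by positivity
  have hε₂1 : ε₂ ≤ 1 := by
    rw [hε₂def, div_le_one (by positivity)]
    nlinarith
  have htrb := SimpleGraph.triangleRemovalBound_pos hε₂pos
  set trb : ℝ := SimpleGraph.triangleRemovalBound ε₂ with htrbdef
  refine ⟨max (⌈((K:ℝ)+1)/trb⌉₊ + 1) (⌈(K:ℝ)/(4*ε')⌉₊ + 1), ?_⟩
  intro n hn G hGfree
  letI : DecidableRel G.Adj := Classical.decRel _
  have hP : Aux2.NoSusp (G := G) := by
    intro x a b c d e hxa hxb hxc hxd hxe hab hbc hcd hde hac had hae hbd hbe hce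
    exact hGfree (Aux.copy_of_config hxa hxb hxc hxd hxe hab hbc hcd hde
      hac had hae hbd hbe hce)
  have hn1 : ⌈((K:ℝ)+1)/trb⌉₊ + 1 ≤ n := le_trans (le_max_left _ _) hn
  have hn2 : ⌈(K:ℝ)/(4*ε')⌉₊ + 1 ≤ n := le_trans (le_max_right _ _) hn
  have hnpos : 0 < n := by omega
  have hnposr : (0:ℝ) < n := by exact_mod_cast hnpos
  have hb1 : ((K:ℝ)+1)/trb < n := by
    calc ((K:ℝ)+1)/trb ≤ ⌈((K:ℝ)+1)/trb⌉₊ := Nat.le_ceil _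
      _ < n := by exact_mod_cast (by omega : ⌈((K:ℝ)+1)/trb⌉₊ < n)
  have hb2 : (K:ℝ)/(4*ε') < n := by
    calc (K:ℝ)/(4*ε') ≤ ⌈(K:ℝ)/(4*ε')⌉₊ := Nat.le_ceil _
      _ < n := by exact_mod_cast (by omega : ⌈(K:ℝ)/(4*ε')⌉₊ < n)
  have hbig : (((K:ℝ) + 1) * n * n : ℝ) < trb * (n:ℝ) ^ 3 := by
    rw [div_lt_iff₀ htrb] at hb1
    calc (((K:ℝ) + 1) * n * n : ℝ) = ((K:ℝ) + 1) * ((n:ℝ) * n) := by ring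
      _ < ((n:ℝ) * trb) * ((n:ℝ) * n) :=
          mul_lt_mul_of_pos_right hb1 (by positivity)
      _ = trb * (n:ℝ) ^ 3 := by ring
  have hmain := AuxFinal.main_bound G hP hK9 ε₂ hε₂pos hε₂1 (by
    rw [← htrbdef]; exact_mod_cast hbig)
  have htc : (triCount G : ℝ) = ((G.cliqueFinset 3).card : ℝ) := by
    rw [triCount, AuxFinal.triCount_eq]
  rw [htc]
  refine le_trans hmain ?_
  -- final arithmetic
  have hq1 : (K:ℝ) * ε₂ * (n:ℝ)^2 = (ε'/8) * (n:ℝ)^2 := by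
    rw [hε₂def]
    field_simp
  have h12 : 12 ≤ (K:ℝ) * ε' := by
    rw [div_le_iff₀ hε'pos] at hK12
    linarith
  have hq2 : 3 * (n:ℝ)^2 / K ≤ (ε'/4) * (n:ℝ)^2 := by
    rw [div_le_iff₀ hKposr]
    nlinarith [sq_nonneg (n:ℝ), h12]
  have hq4 : (K:ℝ) * n / 8 ≤ (ε'/2) * (n:ℝ)^2 := by
    rw [div_lt_iff₀ (by positivity : (0:ℝ) < 4*ε')] at hb2
    nlinarith [hb2, hnposr]
  have hq5 : ε' * (n:ℝ)^2 ≤ ε * (n:ℝ)^2 :=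
    mul_le_mul_of_nonneg_right hε'le (sq_nonneg _)
  have hexp : (n:ℝ) * ((n:ℝ) + K) / 8 = (n:ℝ)^2/8 + (K:ℝ)*n/8 := by ring
  calc (K:ℝ) * ε₂ * (n:ℝ) ^ 2 + 3 * (n:ℝ) ^ 2 / K + (n:ℝ) * ((n:ℝ) + K) / 8
      = (ε'/8) * (n:ℝ)^2 + 3 * (n:ℝ)^2 / K + ((n:ℝ)^2/8 + (K:ℝ)*n/8) := by
        rw [hq1, hexp]
    _ ≤ (ε'/8) * (n:ℝ)^2 + (ε'/4) * (n:ℝ)^2 + ((n:ℝ)^2/8 + (ε'/2) * (n:ℝ)^2) := by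
        linarith
    _ ≤ (n:ℝ)^2/8 + ε' * (n:ℝ)^2 := by
        nlinarith [mul_nonneg hε'pos.le (sq_nonneg (n:ℝ))]
    _ ≤ (n:ℝ)^2/8 + ε * (n:ℝ)^2 := by linarith
end

section
/- Let G be a graph with no copy of \widehat{P}_5 and suppose every edge of a subgraph H \subseteq G has codegree at least 2 in H. If x is a vertex of H whose neighborhood in H contains a path a-b-c-d-e with 4 edges, then every common neighbor of a and x in H lies in {b, c, d, e}. -/
open SimpleGraph

/-- Key local observation: in a subgraph `H` of a `\widehat{P}_5`-free graph `G`
all of whose edges have codegree at least 2, if `N_H(x)` contains a 4-edge path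
`a-b-c-d-e`, then every common neighbour of `a` and `x` lies in `{b, c, d, e}`. -/
theorem common_neighbor_in_path {V : Type*} [Fintype V] (G H : SimpleGraph V)
    (hHG : H ≤ G)
    (hP5 : ¬ containsCopy (susp (pathGraph 6)) G)
    (hcod : ∀ u w : V, H.Adj u w → 2 ≤ codeg H u w)
    (x a b c d e : V) (hnodup : ([a, b, c, d, e] : List V).Nodup)
    (hxa : H.Adj x a) (hxb : H.Adj x b) (hxc : H.Adj x c) (hxd : H.Adj x d)
    (hxe : H.Adj x e)
    (hab : H.Adj a b) (hbc : H.Adj b c) (hcd : H.Adj c d) (hde : H.Adj d e) :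
    ∀ w : V, H.Adj a w → H.Adj x w → w ∈ ({b, c, d, e} : Set V) := by
  intro w haw hxw
  by_contra hw
  simp only [Set.mem_insert_iff, Set.mem_singleton_iff] at hw
  push_neg at hw
  obtain ⟨hwb, hwc, hwd, hwe⟩ := hw
  simp only [List.nodup_cons, List.mem_cons, List.not_mem_nil, or_false,
    List.mem_singleton, List.nodup_nil, and_true] at hnodup
  push_neg at hnodup
  obtain ⟨⟨hab', hac', had', hae'⟩, ⟨hbc', hbd', hbe'⟩, ⟨hcd', hce'⟩, hde'⟩ := hnodup
  apply hP5
  set v : Fin 6 → V := ![w, a, b, c, d, e] with hv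
  refine ⟨⟨fun o => o.elim x v, ?_⟩, ?_⟩
  · rintro (_ | i) (_ | j) h
    · exact h.elim
    · simp only [Option.elim]
      fin_cases j <;> simp only [hv, Matrix.cons_val_zero, Matrix.cons_val_one,
        Matrix.head_cons] <;>
        first
        | exact hHG hxw | exact hHG hxa | exact hHG hxb | exact hHG hxc
        | exact hHG hxd | exact hHG hxe
    · simp only [Option.elim]
      fin_cases i <;> simp only [hv, Matrix.cons_val_zero, Matrix.cons_val_one,
        Matrix.head_cons] <;>
        first
        | exact (hHG hxw).symm | exact (hHG hxa).symm | exact (hHG hxb).symm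
        | exact (hHG hxc).symm | exact (hHG hxd).symm | exact (hHG hxe).symm
    · simp only [Option.elim]
      have h' : (pathGraph 6).Adj i j := h
      rw [pathGraph_adj] at h'
      fin_cases i <;> fin_cases j <;> simp_all <;>
        first
        | exact hHG haw.symm | exact hHG haw | exact hHG hab | exact hHG hab.symm
        | exact hHG hbc | exact hHG hbc.symm | exact hHG hcd | exact hHG hcd.symm
        | exact hHG hde | exact hHG hde.symm
  · have hx : ∀ j : Fin 6, x ≠ v j := by
      intro j
      fin_cases j <;> simp only [hv, Matrix.cons_val_zero, Matrix.cons_val_one,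
        Matrix.head_cons] <;>
        first
        | exact hxw.ne | exact hxa.ne | exact hxb.ne | exact hxc.ne
        | exact hxd.ne | exact hxe.ne
    have hvinj : Function.Injective v := by
      intro i j hij
      fin_cases i <;> fin_cases j <;> simp_all [hv] <;>
        first
        | rfl
        | exact absurd hij haw.ne'
        | exact absurd hij.symm haw.ne'
        | exact absurd hij hwb | exact absurd hij.symm hwb
        | exact absurd hij hwc | exact absurd hij.symm hwc
        | exact absurd hij hwd | exact absurd hij.symm hwd
        | exact absurd hij hwe | exact absurd hij.symm hwe
        | exact absurd hij hab' | exact absurd hij.symm hab'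
        | exact absurd hij hac' | exact absurd hij.symm hac'
        | exact absurd hij had' | exact absurd hij.symm had'
        | exact absurd hij hae' | exact absurd hij.symm hae'
        | exact absurd hij hbc' | exact absurd hij.symm hbc'
        | exact absurd hij hbd' | exact absurd hij.symm hbd'
        | exact absurd hij hbe' | exact absurd hij.symm hbe'
        | exact absurd hij hcd' | exact absurd hij.symm hcd'
        | exact absurd hij hce' | exact absurd hij.symm hce'
        | exact absurd hij hde' | exact absurd hij.symm hde'
    rintro (_ | i) (_ | j) hij
    · rfl
    · exact absurd hij (hx j)
    · exact absurd hij.symm (hx i)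
    · exact congrArg some (hvinj hij)
end
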